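/- arXiv:cs/0503065 — 6 statements merged into one kernel-verified Lean document; each statement's English description precedes it below -/
import Mathlib

section
/- The category of graphs Gr does not have all pushouts: there exists a span of graphs G₁ ← G₀ → G₂ that admits no pushout. Concretely, if G₀ has a single unlabeled node, G₁ a single node labeled a₁, and G₂ a single node labeled a₂ with a₁ ≠ a₂ constants (arity 0), then the span of the unique homomorphisms from G₀ has no cocone, hence no pushout. -/
open CategoryTheory

/-- A graph over a signature `Ω` with arity function `ar`: nodes, an (implicit) subset of
labeled nodes (those where `label` is `some`), and a successor function assigning to each
labeled node a string of nodes whose length is the arity of its label. Unlabeled nodes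
have no successors. -/
structure SigGraph (Ω : Type) (ar : Ω → ℕ) where
  N : Type
  label : N → Option Ω
  succ : N → List N
  hlen : ∀ n f, label n = some f → (succ n).length = ar f
  hnone : ∀ n, label n = none → succ n = []

namespace SigGraph

variable {Ω : Type} {ar : Ω → ℕ}

/-- A graph homomorphism: a map on nodes preserving labeledness, labels and successors. -/
@[ext]
structure Hom (G H : SigGraph Ω ar) where
  toFun : G.N → H.N
  map_label : ∀ n f, G.label n = some f → H.label (toFun n) = some f
  map_succ : ∀ n f, G.label n = some f → H.succ (toFun n) = (G.succ n).map toFun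

def Hom.id (G : SigGraph Ω ar) : Hom G G :=
  ⟨fun n => n, fun _ _ h => h, fun n _ _ => by simp⟩

def Hom.comp {G H K : SigGraph Ω ar} (φ : Hom G H) (ψ : Hom H K) : Hom G K where
  toFun := fun n => ψ.toFun (φ.toFun n)
  map_label := fun n f h => ψ.map_label _ f (φ.map_label n f h)
  map_succ := fun n f h => by
    rw [ψ.map_succ _ f (φ.map_label n f h), φ.map_succ n f h, List.map_map]; rfl

instance : Category (SigGraph Ω ar) where
  Hom := Hom
  id := Hom.id
  comp := Hom.comp
  id_comp := by intros; rfl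
  comp_id := by intros; rfl
  assoc := by intros; rfl

/-- An edge of a graph: a labeled node together with a position among its successors. -/
def Edge (G : SigGraph Ω ar) := Σ n : G.N, Fin (G.succ n).length

lemma Edge.label_isSome {G : SigGraph Ω ar} (e : G.Edge) : (G.label e.1).isSome := by
  have h2 : 0 < (G.succ e.1).length := Nat.lt_of_le_of_lt (Nat.zero_le _) e.2.isLt
  cases hl : G.label e.1 with
  | none => rw [G.hnone e.1 hl] at h2; simp at h2
  | some f => rfl

/-- The image of an edge under a homomorphism. -/
def Hom.edgeMap {G H : SigGraph Ω ar} (φ : Hom G H) (e : G.Edge) : H.Edge :=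
  ⟨φ.toFun e.1, ⟨e.2, by
    obtain ⟨f, hf⟩ := Option.isSome_iff_exists.mp e.label_isSome
    rw [φ.map_succ e.1 f hf, List.length_map]; exact e.2.isLt⟩⟩

open Classical in
/-- The disconnected graph `D(G,E)`: nodes of `G` plus a fresh unlabeled node `n[i]`
for each edge `(n,i) ∈ E`, with each edge of `E` redirected to its fresh node. -/
noncomputable def D (G : SigGraph Ω ar) (E : Set G.Edge) : SigGraph Ω ar where
  N := G.N ⊕ {e : G.Edge // e ∈ E}
  label := Sum.elim G.label fun _ => none
  succ := Sum.elim
    (fun n => List.ofFn fun i : Fin (G.succ n).length =>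
      if h : (⟨n, i⟩ : G.Edge) ∈ E then Sum.inr ⟨⟨n, i⟩, h⟩ else Sum.inl ((G.succ n).get i))
    (fun _ => [])
  hlen := by
    rintro (n | e) f h
    · simpa using G.hlen n f h
    · simp at h
  hnone := by
    rintro (n | e) h
    · simp only [Sum.elim_inl] at h ⊢
      simp [List.ofFn_eq_nil_iff, G.hnone n h]
    · rfl

/-- The connection homomorphism `δ_{G,E} : D(G,E) → G`. -/
noncomputable def delta (G : SigGraph Ω ar) (E : Set G.Edge) : Hom (G.D E) G where
  toFun := Sum.elim (fun n => n) (fun e => (G.succ e.1.1).get e.1.2)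
  map_label := by
    rintro (n | e) f h
    · exact h
    · simp [D] at h
  map_succ := by
    rintro (n | e) f h
    · simp only [D, Sum.elim_inl, List.map_ofFn]
      apply List.ext_getElem
      · simp
      · intro i h1 h2
        simp only [List.getElem_ofFn, Function.comp_apply]
        split <;> simp [List.get_eq_getElem]
    · simp [D] at h
end SigGraph
namespace SigGraph
variable {Ω : Type} {ar : Ω → ℕ}

/-- The underlying node map of the disconnected homomorphism `D_{φ,E}`. -/
def dmapFun {G H : SigGraph Ω ar} (φ : Hom G H) (E : Set G.Edge) :
    (G.D E).N → (H.D (φ.edgeMap '' E)).N :=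
  Sum.elim (fun n => Sum.inl (φ.toFun n))
    (fun e => Sum.inr ⟨φ.edgeMap e.1, Set.mem_image_of_mem _ e.2⟩)

/-- `μ` is `Ω`-injective if it is injective on labeled nodes. -/
def OmegaInjective {G H : SigGraph Ω ar} (μ : Hom G H) : Prop :=
  ∀ n n', (G.label n).isSome → (G.label n').isSome → μ.toFun n = μ.toFun n' → n = n'

/-- The conditions on the right leg `ρ : D(L,E) → R` of an LRR-rewrite rule:
unlabeled nodes of `L` are mapped to unlabeled nodes of `R`, injectively. -/
def IsLRRRule {L R : SigGraph Ω ar} (E : Set L.Edge) (ρ : Hom (L.D E) R) : Prop :=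
  (∀ n : L.N, L.label n = none → R.label (ρ.toFun (Sum.inl n)) = none) ∧
  (∀ n n' : L.N, L.label n = none → L.label n' = none →
      ρ.toFun (Sum.inl n) = ρ.toFun (Sum.inl n') → n = n')

section Span
variable {G₀ G₁ G₂ : SigGraph Ω ar}

/-- The relation on `N₁ + N₂` generated by a span: `φ₁(n₀) ∼ φ₂(n₀)`. -/
def spanRel (φ₁ : Hom G₀ G₁) (φ₂ : Hom G₀ G₂) : (G₁.N ⊕ G₂.N) → (G₁.N ⊕ G₂.N) → Prop :=
  fun x y => ∃ n₀, x = Sum.inl (φ₁.toFun n₀) ∧ y = Sum.inr (φ₂.toFun n₀)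

/-- Label of a node of the disjoint union. -/
def nodeLabel (G₁ G₂ : SigGraph Ω ar) : (G₁.N ⊕ G₂.N) → Option Ω :=
  Sum.elim G₁.label G₂.label

/-- Successors of a node of the disjoint union. -/
def nodeSucc (G₁ G₂ : SigGraph Ω ar) : (G₁.N ⊕ G₂.N) → List (G₁.N ⊕ G₂.N) :=
  Sum.elim (fun n => (G₁.succ n).map Sum.inl) (fun n => (G₂.succ n).map Sum.inr)

/-- A span of graphs is strongly labeled if in each equivalence class all labeled
nodes share the same label and have pairwise equivalent successors. -/
def StronglyLabeled (φ₁ : Hom G₀ G₁) (φ₂ : Hom G₀ G₂) : Prop :=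
  ∀ x y, Relation.EqvGen (spanRel φ₁ φ₂) x y →
    ∀ f g, nodeLabel G₁ G₂ x = some f → nodeLabel G₁ G₂ y = some g →
      f = g ∧ List.Forall₂ (Relation.EqvGen (spanRel φ₁ φ₂)) (nodeSucc G₁ G₂ x) (nodeSucc G₁ G₂ y)

open Classical in
/-- The candidate pushout graph of a span: nodes are the quotient of `N₁ + N₂`,
labeled classes are those containing a labeled node, labels and successors are
taken from a (chosen) labeled representative. -/
noncomputable def pushoutGraph (φ₁ : Hom G₀ G₁) (φ₂ : Hom G₀ G₂) : SigGraph Ω ar where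
  N := Quot (spanRel φ₁ φ₂)
  label := fun c =>
    if h : ∃ x, Quot.mk _ x = c ∧ (nodeLabel G₁ G₂ x).isSome
    then nodeLabel G₁ G₂ h.choose else none
  succ := fun c =>
    if h : ∃ x, Quot.mk _ x = c ∧ (nodeLabel G₁ G₂ x).isSome
    then (nodeSucc G₁ G₂ h.choose).map (Quot.mk _) else []
  hlen := by
    intro c f h
    by_cases hx : ∃ x, Quot.mk _ x = c ∧ (nodeLabel G₁ G₂ x).isSome
    · rw [dif_pos hx] at h ⊢
      rw [List.length_map]
      rcases hc : hx.choose with n | n <;> rw [hc] at h <;>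
        simp only [nodeLabel, nodeSucc, Sum.elim_inl, Sum.elim_inr] at h ⊢ <;>
        rw [List.length_map]
      · exact G₁.hlen n f h
      · exact G₂.hlen n f h
    · rw [dif_neg hx] at h; simp at h
  hnone := by
    intro c h
    by_cases hx : ∃ x, Quot.mk _ x = c ∧ (nodeLabel G₁ G₂ x).isSome
    · rw [dif_pos hx] at h
      have := hx.choose_spec.2
      rw [h] at this; simp at this
    · rw [dif_neg hx]

end Span

open Classical in
/-- The disconnected graph `D̄(G,o)`: `G` plus a fresh unlabeled node `mr`, with
all edges targeting `o` redirected to `mr`. -/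
noncomputable def Dbar (G : SigGraph Ω ar) (o : G.N) : SigGraph Ω ar where
  N := G.N ⊕ Unit
  label := Sum.elim G.label fun _ => none
  succ := Sum.elim
    (fun n => (G.succ n).map fun t => if t = o then Sum.inr () else Sum.inl t)
    (fun _ => [])
  hlen := by
    rintro (n | u) f h
    · simp only [Sum.elim_inl] at h ⊢
      rw [List.length_map]; exact G.hlen n f h
    · simp at h
  hnone := by
    rintro (n | u) h
    · simp only [Sum.elim_inl] at h ⊢
      rw [G.hnone n h]; rfl
    · rfl

open Classical in
/-- The homomorphism `δ_μ : D̄(G,o) → G`, identity on `N_G`, sending `mr` to `o`. -/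
noncomputable def deltaBar (G : SigGraph Ω ar) (o : G.N) : Hom (G.Dbar o) G where
  toFun := Sum.elim (fun n => n) fun _ => o
  map_label := by
    rintro (n | u) f h
    · exact h
    · simp [Dbar] at h
  map_succ := by
    rintro (n | u) f h
    · simp only [Dbar, Sum.elim_inl, List.map_map]
      symm
      refine (List.map_congr_left ?_).trans (List.map_id _)
      intro t ht
      by_cases h' : t = o <;> simp [h']
    · simp [Dbar] at h

open Classical in
/-- The graph obtained from `U` by redirecting all edges targeting `a` towards `b`. -/
noncomputable def redirect (U : SigGraph Ω ar) (a b : U.N) : SigGraph Ω ar where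
  N := U.N
  label := U.label
  succ := fun n => (U.succ n).map fun t => if t = a then b else t
  hlen := by intro n f h; rw [List.length_map]; exact U.hlen n f h
  hnone := by intro n h; rw [U.hnone n h]; rfl

/-- The graph `P` with two unlabeled nodes: `false` is `ar`, `true` is `pr`. -/
def P (Ω : Type) (ar : Ω → ℕ) : SigGraph Ω ar :=
  ⟨Bool, fun _ => none, fun _ => [], fun _ _ h => by simp at h, fun _ _ => rfl⟩

/-- The switch graph `SW` with three unlabeled nodes: `some false` is `ar`,
`some true` is `pr`, `none` is `mr`. -/
def SW (Ω : Type) (ar : Ω → ℕ) : SigGraph Ω ar :=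
  ⟨Option Bool, fun _ => none, fun _ => [], fun _ _ h => by simp at h, fun _ _ => rfl⟩

/-- `λ : SW → P`, sending `ar, mr ↦ ar` and `pr ↦ pr`. -/
def lamGR : Hom (SW Ω ar) (P Ω ar) :=
  ⟨fun x => x.getD false, fun _ _ h => by simp [SW] at h, fun _ _ h => by simp [SW] at h⟩

/-- `ρ : SW → P`, sending `ar ↦ ar` and `pr, mr ↦ pr`. -/
def rhoGR : Hom (SW Ω ar) (P Ω ar) :=
  ⟨fun x => x.getD true, fun _ _ h => by simp [SW] at h, fun _ _ h => by simp [SW] at h⟩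

/-- `D̄_μ : SW → D̄(U, μ(ar))`. -/
noncomputable def dbarMu {U : SigGraph Ω ar} (μ : Hom (P Ω ar) U) :
    Hom (SW Ω ar) (U.Dbar (μ.toFun false)) where
  toFun := fun x => match x with
    | some b => Sum.inl (μ.toFun b)
    | none => Sum.inr ()
  map_label := fun _ _ h => by simp [SW] at h
  map_succ := fun _ _ h => by simp [SW] at h

/-- A graph with a single unlabeled node. -/
def oneUnlabeled (Ω : Type) (ar : Ω → ℕ) : SigGraph Ω ar :=
  ⟨PUnit, fun _ => none, fun _ => [], fun _ _ h => by simp at h, fun _ _ => rfl⟩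

/-- A graph with a single node labeled `a` (looping on itself `ar a` times). -/
def singleLabeled (a : Ω) : SigGraph Ω ar :=
  ⟨PUnit, fun _ => some a, fun _ => List.replicate (ar a) PUnit.unit,
   fun _ f h => by cases h; simp, fun _ h => by simp at h⟩

/-- The unique homomorphism from the one-point unlabeled graph to `singleLabeled a`. -/
def toSingle (a : Ω) : Hom (oneUnlabeled Ω ar) (singleLabeled a) :=
  ⟨fun _ => PUnit.unit, fun _ _ h => by simp [oneUnlabeled] at h,
   fun _ _ h => by simp [oneUnlabeled] at h⟩

end SigGraph

/-- The category of graphs does not have all pushouts: the span of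
the unique homomorphisms from a single unlabeled node to one-node graphs labeled by
distinct constants `a₁ ≠ a₂` admits no cocone (no commutative square), hence no pushout. -/
theorem no_pushout_distinct_constants {Ω : Type} {ar : Ω → ℕ} (a₁ a₂ : Ω)
    (hne : a₁ ≠ a₂) (h₁ : ar a₁ = 0) (h₂ : ar a₂ = 0) :
    (¬ ∃ (V : SigGraph Ω ar) (i₁ : SigGraph.Hom (SigGraph.singleLabeled (ar := ar) a₁) V)
        (i₂ : SigGraph.Hom (SigGraph.singleLabeled (ar := ar) a₂) V),
        (SigGraph.toSingle a₁).comp i₁ = (SigGraph.toSingle a₂).comp i₂) ∧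
    (¬ ∃ (V : SigGraph Ω ar) (i₁ : SigGraph.Hom (SigGraph.singleLabeled (ar := ar) a₁) V)
        (i₂ : SigGraph.Hom (SigGraph.singleLabeled (ar := ar) a₂) V),
        IsPushout (C := SigGraph Ω ar) (SigGraph.toSingle a₁) (SigGraph.toSingle a₂) i₁ i₂) := by
  have key : ¬ ∃ (V : SigGraph Ω ar) (i₁ : SigGraph.Hom (SigGraph.singleLabeled (ar := ar) a₁) V)
      (i₂ : SigGraph.Hom (SigGraph.singleLabeled (ar := ar) a₂) V),
      (SigGraph.toSingle a₁).comp i₁ = (SigGraph.toSingle a₂).comp i₂ := by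
    rintro ⟨V, i₁, i₂, hc⟩
    have heq : i₁.toFun PUnit.unit = i₂.toFun PUnit.unit :=
      congrArg (fun φ => SigGraph.Hom.toFun φ PUnit.unit) hc
    have l1 : V.label (i₁.toFun PUnit.unit) = some a₁ :=
      i₁.map_label PUnit.unit a₁ rfl
    have l2 : V.label (i₂.toFun PUnit.unit) = some a₂ :=
      i₂.map_label PUnit.unit a₂ rfl
    rw [heq, l2] at l1
    exact hne (Option.some.inj l1).symm
  refine ⟨key, ?_⟩
  rintro ⟨V, i₁, i₂, hp⟩
  exact key ⟨V, i₁, i₂, hp.toCommSq.w⟩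
end

section
/- Every strongly labeled span of graphs G₁ ← G₀ → G₂ has a pushout G₃ in the category of graphs, constructed as follows: N₃ = (N₁ + N₂)/∼ where ∼ is generated by φ₁(n₀) ∼ φ₂(n₀) for n₀ ∈ N₀; the labeled nodes of G₃ are the classes containing at least one labeled node; the label of such a class is the common label of its labeled members; and the successors of such a class are the classes of the successors of any labeled node in it. -/
open CategoryTheory

/-- A graph over a signature `Ω` with arity function `ar`: nodes, an (implicit) subset of
labeled nodes (those where `label` is `some`), and a successor function assigning to each
labeled node a string of nodes whose length is the arity of its label. Unlabeled nodes
have no successors. -/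
structure OGraph (Ω : Type) (ar : Ω → ℕ) where
  N : Type
  label : N → Option Ω
  succ : N → List N
  hlen : ∀ n f, label n = some f → (succ n).length = ar f
  hnone : ∀ n, label n = none → succ n = []

namespace OGraph

variable {Ω : Type} {ar : Ω → ℕ}

/-- A graph homomorphism: a map on nodes preserving labeledness, labels and successors. -/
@[ext]
structure Hom (G H : OGraph Ω ar) where
  toFun : G.N → H.N
  map_label : ∀ n f, G.label n = some f → H.label (toFun n) = some f
  map_succ : ∀ n f, G.label n = some f → H.succ (toFun n) = (G.succ n).map toFun

def Hom.id (G : OGraph Ω ar) : Hom G G :=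
  ⟨fun n => n, fun _ _ h => h, fun n _ _ => by simp⟩

def Hom.comp {G H K : OGraph Ω ar} (φ : Hom G H) (ψ : Hom H K) : Hom G K where
  toFun := fun n => ψ.toFun (φ.toFun n)
  map_label := fun n f h => ψ.map_label _ f (φ.map_label n f h)
  map_succ := fun n f h => by
    rw [ψ.map_succ _ f (φ.map_label n f h), φ.map_succ n f h, List.map_map]; rfl

instance : Category (OGraph Ω ar) where
  Hom := Hom
  id := Hom.id
  comp := Hom.comp
  id_comp := by intros; rfl
  comp_id := by intros; rfl
  assoc := by intros; rfl

/-- An edge of a graph: a labeled node together with a position among its successors. -/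
def Edge (G : OGraph Ω ar) := Σ n : G.N, Fin (G.succ n).length

lemma Edge.label_isSome {G : OGraph Ω ar} (e : G.Edge) : (G.label e.1).isSome := by
  have h2 : 0 < (G.succ e.1).length := Nat.lt_of_le_of_lt (Nat.zero_le _) e.2.isLt
  cases hl : G.label e.1 with
  | none => rw [G.hnone e.1 hl] at h2; simp at h2
  | some f => rfl

/-- The image of an edge under a homomorphism. -/
def Hom.edgeMap {G H : OGraph Ω ar} (φ : Hom G H) (e : G.Edge) : H.Edge :=
  ⟨φ.toFun e.1, ⟨e.2, by
    obtain ⟨f, hf⟩ := Option.isSome_iff_exists.mp e.label_isSome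
    rw [φ.map_succ e.1 f hf, List.length_map]; exact e.2.isLt⟩⟩

open Classical in
/-- The disconnected graph `D(G,E)`: nodes of `G` plus a fresh unlabeled node `n[i]`
for each edge `(n,i) ∈ E`, with each edge of `E` redirected to its fresh node. -/
noncomputable def D (G : OGraph Ω ar) (E : Set G.Edge) : OGraph Ω ar where
  N := G.N ⊕ {e : G.Edge // e ∈ E}
  label := Sum.elim G.label fun _ => none
  succ := Sum.elim
    (fun n => List.ofFn fun i : Fin (G.succ n).length =>
      if h : (⟨n, i⟩ : G.Edge) ∈ E then Sum.inr ⟨⟨n, i⟩, h⟩ else Sum.inl ((G.succ n).get i))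
    (fun _ => [])
  hlen := by
    rintro (n | e) f h
    · simpa using G.hlen n f h
    · simp at h
  hnone := by
    rintro (n | e) h
    · simp only [Sum.elim_inl] at h ⊢
      simp [List.ofFn_eq_nil_iff, G.hnone n h]
    · rfl

/-- The connection homomorphism `δ_{G,E} : D(G,E) → G`. -/
noncomputable def delta (G : OGraph Ω ar) (E : Set G.Edge) : Hom (G.D E) G where
  toFun := Sum.elim (fun n => n) (fun e => (G.succ e.1.1).get e.1.2)
  map_label := by
    rintro (n | e) f h
    · exact h
    · simp [D] at h
  map_succ := by
    rintro (n | e) f h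
    · simp only [D, Sum.elim_inl, List.map_ofFn]
      apply List.ext_getElem
      · simp
      · intro i h1 h2
        simp only [List.getElem_ofFn, Function.comp_apply]
        split <;> simp [List.get_eq_getElem]
    · simp [D] at h
end OGraph
namespace OGraph
variable {Ω : Type} {ar : Ω → ℕ}

/-- The underlying node map of the disconnected homomorphism `D_{φ,E}`. -/
def dmapFun {G H : OGraph Ω ar} (φ : Hom G H) (E : Set G.Edge) :
    (G.D E).N → (H.D (φ.edgeMap '' E)).N :=
  Sum.elim (fun n => Sum.inl (φ.toFun n))
    (fun e => Sum.inr ⟨φ.edgeMap e.1, Set.mem_image_of_mem _ e.2⟩)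

/-- `μ` is `Ω`-injective if it is injective on labeled nodes. -/
def OmegaInjective {G H : OGraph Ω ar} (μ : Hom G H) : Prop :=
  ∀ n n', (G.label n).isSome → (G.label n').isSome → μ.toFun n = μ.toFun n' → n = n'

/-- The conditions on the right leg `ρ : D(L,E) → R` of an LRR-rewrite rule:
unlabeled nodes of `L` are mapped to unlabeled nodes of `R`, injectively. -/
def IsLRRRule {L R : OGraph Ω ar} (E : Set L.Edge) (ρ : Hom (L.D E) R) : Prop :=
  (∀ n : L.N, L.label n = none → R.label (ρ.toFun (Sum.inl n)) = none) ∧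
  (∀ n n' : L.N, L.label n = none → L.label n' = none →
      ρ.toFun (Sum.inl n) = ρ.toFun (Sum.inl n') → n = n')

section Span
variable {G₀ G₁ G₂ : OGraph Ω ar}

/-- The relation on `N₁ + N₂` generated by a span: `φ₁(n₀) ∼ φ₂(n₀)`. -/
def spanRel (φ₁ : Hom G₀ G₁) (φ₂ : Hom G₀ G₂) : (G₁.N ⊕ G₂.N) → (G₁.N ⊕ G₂.N) → Prop :=
  fun x y => ∃ n₀, x = Sum.inl (φ₁.toFun n₀) ∧ y = Sum.inr (φ₂.toFun n₀)

/-- Label of a node of the disjoint union. -/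
def nodeLabel (G₁ G₂ : OGraph Ω ar) : (G₁.N ⊕ G₂.N) → Option Ω :=
  Sum.elim G₁.label G₂.label

/-- Successors of a node of the disjoint union. -/
def nodeSucc (G₁ G₂ : OGraph Ω ar) : (G₁.N ⊕ G₂.N) → List (G₁.N ⊕ G₂.N) :=
  Sum.elim (fun n => (G₁.succ n).map Sum.inl) (fun n => (G₂.succ n).map Sum.inr)

/-- A span of graphs is strongly labeled if in each equivalence class all labeled
nodes share the same label and have pairwise equivalent successors. -/
def StronglyLabeled (φ₁ : Hom G₀ G₁) (φ₂ : Hom G₀ G₂) : Prop :=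
  ∀ x y, Relation.EqvGen (spanRel φ₁ φ₂) x y →
    ∀ f g, nodeLabel G₁ G₂ x = some f → nodeLabel G₁ G₂ y = some g →
      f = g ∧ List.Forall₂ (Relation.EqvGen (spanRel φ₁ φ₂)) (nodeSucc G₁ G₂ x) (nodeSucc G₁ G₂ y)

open Classical in
/-- The candidate pushout graph of a span: nodes are the quotient of `N₁ + N₂`,
labeled classes are those containing a labeled node, labels and successors are
taken from a (chosen) labeled representative. -/
noncomputable def pushoutGraph (φ₁ : Hom G₀ G₁) (φ₂ : Hom G₀ G₂) : OGraph Ω ar where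
  N := Quot (spanRel φ₁ φ₂)
  label := fun c =>
    if h : ∃ x, Quot.mk _ x = c ∧ (nodeLabel G₁ G₂ x).isSome
    then nodeLabel G₁ G₂ h.choose else none
  succ := fun c =>
    if h : ∃ x, Quot.mk _ x = c ∧ (nodeLabel G₁ G₂ x).isSome
    then (nodeSucc G₁ G₂ h.choose).map (Quot.mk _) else []
  hlen := by
    intro c f h
    try dsimp only at h ⊢
    by_cases hx : ∃ x, Quot.mk _ x = c ∧ (nodeLabel G₁ G₂ x).isSome
    · rw [dif_pos hx] at h ⊢
      rw [List.length_map]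
      rcases hc : hx.choose with n | n <;> rw [hc] at h <;>
        simp only [nodeLabel, nodeSucc, Sum.elim_inl, Sum.elim_inr] at h ⊢ <;>
        rw [List.length_map]
      · exact G₁.hlen n f h
      · exact G₂.hlen n f h
    · rw [dif_neg hx] at h; simp at h
  hnone := by
    intro c h
    try dsimp only at h ⊢
    by_cases hx : ∃ x, Quot.mk _ x = c ∧ (nodeLabel G₁ G₂ x).isSome
    · rw [dif_pos hx] at h
      have := hx.choose_spec.2
      rw [h] at this; simp at this
    · rw [dif_neg hx]

end Span

open Classical in
/-- The disconnected graph `D̄(G,o)`: `G` plus a fresh unlabeled node `mr`, with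
all edges targeting `o` redirected to `mr`. -/
noncomputable def Dbar (G : OGraph Ω ar) (o : G.N) : OGraph Ω ar where
  N := G.N ⊕ Unit
  label := Sum.elim G.label fun _ => none
  succ := Sum.elim
    (fun n => (G.succ n).map fun t => if t = o then Sum.inr () else Sum.inl t)
    (fun _ => [])
  hlen := by
    rintro (n | u) f h
    · simp only [Sum.elim_inl] at h ⊢
      rw [List.length_map]; exact G.hlen n f h
    · simp at h
  hnone := by
    rintro (n | u) h
    · simp only [Sum.elim_inl] at h ⊢
      rw [G.hnone n h]; rfl
    · rfl

open Classical in
/-- The homomorphism `δ_μ : D̄(G,o) → G`, identity on `N_G`, sending `mr` to `o`. -/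
noncomputable def deltaBar (G : OGraph Ω ar) (o : G.N) : Hom (G.Dbar o) G where
  toFun := Sum.elim (fun n => n) fun _ => o
  map_label := by
    rintro (n | u) f h
    · exact h
    · simp [Dbar] at h
  map_succ := by
    rintro (n | u) f h
    · simp only [Dbar, Sum.elim_inl, List.map_map]
      symm
      refine (List.map_congr_left ?_).trans (List.map_id _)
      intro t ht
      by_cases h' : t = o <;> simp [h']
    · simp [Dbar] at h

open Classical in
/-- The graph obtained from `U` by redirecting all edges targeting `a` towards `b`. -/
noncomputable def redirect (U : OGraph Ω ar) (a b : U.N) : OGraph Ω ar where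
  N := U.N
  label := U.label
  succ := fun n => (U.succ n).map fun t => if t = a then b else t
  hlen := by intro n f h; (try dsimp only); rw [List.length_map]; exact U.hlen n f h
  hnone := by intro n h; (try dsimp only); rw [U.hnone n h]; rfl

/-- The graph `P` with two unlabeled nodes: `false` is `ar`, `true` is `pr`. -/
def P (Ω : Type) (ar : Ω → ℕ) : OGraph Ω ar :=
  ⟨Bool, fun _ => none, fun _ => [], fun _ _ h => by simp at h, fun _ _ => rfl⟩

/-- The switch graph `SW` with three unlabeled nodes: `some false` is `ar`,
`some true` is `pr`, `none` is `mr`. -/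
def SW (Ω : Type) (ar : Ω → ℕ) : OGraph Ω ar :=
  ⟨Option Bool, fun _ => none, fun _ => [], fun _ _ h => by simp at h, fun _ _ => rfl⟩

/-- `λ : SW → P`, sending `ar, mr ↦ ar` and `pr ↦ pr`. -/
def lamGR : Hom (SW Ω ar) (P Ω ar) :=
  ⟨fun x => x.getD false, fun _ _ h => by simp [SW] at h, fun _ _ h => by simp [SW] at h⟩

/-- `ρ : SW → P`, sending `ar ↦ ar` and `pr, mr ↦ pr`. -/
def rhoGR : Hom (SW Ω ar) (P Ω ar) :=
  ⟨fun x => x.getD true, fun _ _ h => by simp [SW] at h, fun _ _ h => by simp [SW] at h⟩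

/-- `D̄_μ : SW → D̄(U, μ(ar))`. -/
noncomputable def dbarMu {U : OGraph Ω ar} (μ : Hom (P Ω ar) U) :
    Hom (SW Ω ar) (U.Dbar (μ.toFun false)) where
  toFun := fun x => match x with
    | some b => Sum.inl (μ.toFun b)
    | none => Sum.inr ()
  map_label := fun _ _ h => by simp [SW] at h
  map_succ := fun _ _ h => by simp [SW] at h

/-- A graph with a single unlabeled node. -/
def oneUnlabeled (Ω : Type) (ar : Ω → ℕ) : OGraph Ω ar :=
  ⟨PUnit, fun _ => none, fun _ => [], fun _ _ h => by simp at h, fun _ _ => rfl⟩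

/-- A graph with a single node labeled `a` (looping on itself `ar a` times). -/
def singleLabeled (a : Ω) : OGraph Ω ar :=
  ⟨PUnit, fun _ => some a, fun _ => List.replicate (ar a) PUnit.unit,
   fun _ f h => by cases h; simp, fun _ h => by simp at h⟩

/-- The unique homomorphism from the one-point unlabeled graph to `singleLabeled a`. -/
def toSingle (a : Ω) : Hom (oneUnlabeled Ω ar) (singleLabeled a) :=
  ⟨fun _ => PUnit.unit, fun _ _ h => by simp [oneUnlabeled] at h,
   fun _ _ h => by simp [oneUnlabeled] at h⟩

end OGraph


namespace OGraph
section POaux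
variable {Ω : Type} {ar : Ω → ℕ} {G₀ G₁ G₂ : OGraph Ω ar}
variable (φ₁ : Hom G₀ G₁) (φ₂ : Hom G₀ G₂)

lemma forall₂_map_quot {l₁ l₂ : List (G₁.N ⊕ G₂.N)}
    (h : List.Forall₂ (Relation.EqvGen (spanRel φ₁ φ₂)) l₁ l₂) :
    l₁.map (Quot.mk (spanRel φ₁ φ₂)) = l₂.map (Quot.mk (spanRel φ₁ φ₂)) := by
  induction h with
  | nil => rfl
  | cons h _ ih => simp only [List.map_cons, ih, Quot.eqvGen_sound h]

lemma pushout_key (hSL : StronglyLabeled φ₁ φ₂) (x : G₁.N ⊕ G₂.N) (f : Ω)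
    (hx : nodeLabel G₁ G₂ x = some f) :
    (pushoutGraph φ₁ φ₂).label (Quot.mk _ x) = some f ∧
    (pushoutGraph φ₁ φ₂).succ (Quot.mk _ x)
      = (nodeSucc G₁ G₂ x).map (Quot.mk (spanRel φ₁ φ₂)) := by
  classical
  have hex : ∃ y, Quot.mk (spanRel φ₁ φ₂) y = Quot.mk (spanRel φ₁ φ₂) x
      ∧ (nodeLabel G₁ G₂ y).isSome := ⟨x, rfl, by simp [hx]⟩
  obtain ⟨g, hg⟩ := Option.isSome_iff_exists.mp hex.choose_spec.2
  have hrel : Relation.EqvGen (spanRel φ₁ φ₂) hex.choose x := Quot.eq.mp hex.choose_spec.1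
  obtain ⟨hfg, hsucc⟩ := hSL _ _ hrel g f hg hx
  constructor
  · show (if h : _ then _ else _) = _
    rw [dif_pos hex, hg, hfg]
  · show (if h : _ then _ else _) = _
    exact (dif_pos hex).trans (forall₂_map_quot _ _ hsucc)

lemma pushout_label_elim (c : (pushoutGraph φ₁ φ₂).N) (f₀ : Ω)
    (h : (pushoutGraph φ₁ φ₂).label c = some f₀) :
    ∃ x, Quot.mk (spanRel φ₁ φ₂) x = c ∧ nodeLabel G₁ G₂ x = some f₀ ∧
      (pushoutGraph φ₁ φ₂).succ c = (nodeSucc G₁ G₂ x).map (Quot.mk (spanRel φ₁ φ₂)) := by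
  classical
  by_cases hex : ∃ x, Quot.mk (spanRel φ₁ φ₂) x = c ∧ (nodeLabel G₁ G₂ x).isSome
  · refine ⟨hex.choose, hex.choose_spec.1, ?_, ?_⟩
    · have h' : (pushoutGraph φ₁ φ₂).label c = nodeLabel G₁ G₂ hex.choose := by
        show (if h : _ then _ else _) = _
        rw [dif_pos hex]
      rw [← h', h]
    · show _ = _
      show (if h : _ then _ else _) = _
      exact dif_pos hex
  · exfalso
    have h' : (pushoutGraph φ₁ φ₂).label c = none := by
      show (if h : _ then _ else _) = _
      rw [dif_neg hex]
    rw [h'] at h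
    simp at h

variable (hSL : StronglyLabeled φ₁ φ₂)

/-- First pushout leg. -/
noncomputable def psiOne : Hom G₁ (pushoutGraph φ₁ φ₂) where
  toFun n := Quot.mk (spanRel φ₁ φ₂) (Sum.inl n)
  map_label n f h := (pushout_key φ₁ φ₂ hSL (Sum.inl n) f h).1
  map_succ n f h := by
    rw [(pushout_key φ₁ φ₂ hSL (Sum.inl n) f h).2]
    simp [nodeSucc, List.map_map]
    rfl

/-- Second pushout leg. -/
noncomputable def psiTwo : Hom G₂ (pushoutGraph φ₁ φ₂) where
  toFun n := Quot.mk (spanRel φ₁ φ₂) (Sum.inr n)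
  map_label n f h := (pushout_key φ₁ φ₂ hSL (Sum.inr n) f h).1
  map_succ n f h := by
    rw [(pushout_key φ₁ φ₂ hSL (Sum.inr n) f h).2]
    simp [nodeSucc, List.map_map]
    rfl

/-- The mediating homomorphism out of the pushout. -/
noncomputable def descHom {W : OGraph Ω ar} (f : Hom G₁ W) (g : Hom G₂ W)
    (hc : ∀ n₀, f.toFun (φ₁.toFun n₀) = g.toFun (φ₂.toFun n₀)) :
    Hom (pushoutGraph φ₁ φ₂) W where
  toFun := Quot.lift (Sum.elim f.toFun g.toFun) (by
    rintro x y ⟨n₀, rfl, rfl⟩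
    exact hc n₀)
  map_label c f₀ h := by
    obtain ⟨x, hxc, hxl, _⟩ := pushout_label_elim φ₁ φ₂ c f₀ h
    subst hxc
    cases x with
    | inl n => exact f.map_label n f₀ hxl
    | inr n => exact g.map_label n f₀ hxl
  map_succ c f₀ h := by
    obtain ⟨x, hxc, hxl, hxs⟩ := pushout_label_elim φ₁ φ₂ c f₀ h
    subst hxc
    simp only [hxs, List.map_map]
    cases x with
    | inl n =>
      simp only [Quot.lift_mk, Sum.elim_inl]
      rw [f.map_succ n f₀ hxl]
      simp [nodeSucc, List.map_map]
      induction G₁.succ n with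
      | nil => rfl
      | cons a l ih => exact congrArg (List.cons _) ih
    | inr n =>
      simp only [Quot.lift_mk, Sum.elim_inr]
      rw [g.map_succ n f₀ hxl]
      simp [nodeSucc, List.map_map]
      induction G₂.succ n with
      | nil => rfl
      | cons a l ih => exact congrArg (List.cons _) ih

end POaux
end OGraph

/-- Every strongly labeled span of graphs has a pushout, given by the
quotient construction `pushoutGraph` with legs induced by the quotient map. -/
theorem strongly_labeled_span_has_pushout {Ω : Type} {ar : Ω → ℕ}
    {G₀ G₁ G₂ : OGraph Ω ar} (φ₁ : OGraph.Hom G₀ G₁) (φ₂ : OGraph.Hom G₀ G₂)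
    (hSL : OGraph.StronglyLabeled φ₁ φ₂) :
    ∃ (ψ₁ : OGraph.Hom G₁ (OGraph.pushoutGraph φ₁ φ₂))
      (ψ₂ : OGraph.Hom G₂ (OGraph.pushoutGraph φ₁ φ₂)),
      ψ₁.toFun = (fun n => Quot.mk (OGraph.spanRel φ₁ φ₂) (Sum.inl n)) ∧
      ψ₂.toFun = (fun n => Quot.mk (OGraph.spanRel φ₁ φ₂) (Sum.inr n)) ∧
      IsPushout (C := OGraph Ω ar) φ₁ φ₂ ψ₁ ψ₂ := by
  classical
  refine ⟨OGraph.psiOne φ₁ φ₂ hSL, OGraph.psiTwo φ₁ φ₂ hSL, rfl, rfl, ?_⟩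
  let P₃ : OGraph Ω ar := OGraph.pushoutGraph φ₁ φ₂
  let ψ₁ : G₁ ⟶ P₃ := OGraph.psiOne φ₁ φ₂ hSL
  let ψ₂ : G₂ ⟶ P₃ := OGraph.psiTwo φ₁ φ₂ hSL
  let φ₁' : G₀ ⟶ G₁ := φ₁
  let φ₂' : G₀ ⟶ G₂ := φ₂
  have comm : φ₁' ≫ ψ₁ = φ₂' ≫ ψ₂ := by
    show OGraph.Hom.comp φ₁ (OGraph.psiOne φ₁ φ₂ hSL) = OGraph.Hom.comp φ₂ (OGraph.psiTwo φ₁ φ₂ hSL)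
    apply OGraph.Hom.ext
    funext n₀
    exact Quot.sound ⟨n₀, rfl, rfl⟩
  have hcolim : Limits.IsColimit (Limits.PushoutCocone.mk ψ₁ ψ₂ comm) := by
    refine Limits.PushoutCocone.IsColimit.mk comm
      (fun s => OGraph.descHom φ₁ φ₂ s.inl s.inr
        (fun n₀ => congrFun (congrArg OGraph.Hom.toFun s.condition) n₀)) ?_ ?_ ?_
    · intro s
      apply OGraph.Hom.ext
      funext n
      rfl
    · intro s
      apply OGraph.Hom.ext
      funext n
      rfl
    · intro s m h1 h2
      apply OGraph.Hom.ext
      funext c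
      induction c using Quot.ind with
      | mk x =>
        cases x with
        | inl n => exact congrFun (congrArg OGraph.Hom.toFun h1) n
        | inr n => exact congrFun (congrArg OGraph.Hom.toFun h2) n
  exact IsPushout.of_isColimit hcolim
end

section
/- Let L ← D(L,E) → R (with maps δ_{L,E} and ρ) be an LRR-rewrite rule, and let μ : L → U be an Ω-injective graph homomorphism. Then the span D(U,μ(E)) ← D(L,E) → R (with maps D_{μ,E} and ρ) is strongly labeled, and hence has a pushout in the category of graphs. -/
open CategoryTheory

/-- A graph over a signature `Ω` with arity function `ar`: nodes, an (implicit) subset of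
labeled nodes (those where `label` is `some`), and a successor function assigning to each
labeled node a string of nodes whose length is the arity of its label. Unlabeled nodes
have no successors. -/
structure TGraph (Ω : Type) (ar : Ω → ℕ) where
  N : Type
  label : N → Option Ω
  succ : N → List N
  hlen : ∀ n f, label n = some f → (succ n).length = ar f
  hnone : ∀ n, label n = none → succ n = []

namespace TGraph

variable {Ω : Type} {ar : Ω → ℕ}

/-- A graph homomorphism: a map on nodes preserving labeledness, labels and successors. -/
@[ext]
structure Hom (G H : TGraph Ω ar) where
  toFun : G.N → H.N
  map_label : ∀ n f, G.label n = some f → H.label (toFun n) = some f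
  map_succ : ∀ n f, G.label n = some f → H.succ (toFun n) = (G.succ n).map toFun

def Hom.id (G : TGraph Ω ar) : Hom G G :=
  ⟨fun n => n, fun _ _ h => h, fun n _ _ => by simp⟩

def Hom.comp {G H K : TGraph Ω ar} (φ : Hom G H) (ψ : Hom H K) : Hom G K where
  toFun := fun n => ψ.toFun (φ.toFun n)
  map_label := fun n f h => ψ.map_label _ f (φ.map_label n f h)
  map_succ := fun n f h => by
    rw [ψ.map_succ _ f (φ.map_label n f h), φ.map_succ n f h, List.map_map]; rfl

instance : Category (TGraph Ω ar) where
  Hom := Hom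
  id := Hom.id
  comp := Hom.comp
  id_comp := by intros; rfl
  comp_id := by intros; rfl
  assoc := by intros; rfl

/-- An edge of a graph: a labeled node together with a position among its successors. -/
def Edge (G : TGraph Ω ar) := Σ n : G.N, Fin (G.succ n).length

lemma Edge.label_isSome {G : TGraph Ω ar} (e : G.Edge) : (G.label e.1).isSome := by
  have h2 : 0 < (G.succ e.1).length := Nat.lt_of_le_of_lt (Nat.zero_le _) e.2.isLt
  cases hl : G.label e.1 with
  | none => rw [G.hnone e.1 hl] at h2; simp at h2
  | some f => rfl

/-- The image of an edge under a homomorphism. -/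
def Hom.edgeMap {G H : TGraph Ω ar} (φ : Hom G H) (e : G.Edge) : H.Edge :=
  ⟨φ.toFun e.1, ⟨e.2, by
    obtain ⟨f, hf⟩ := Option.isSome_iff_exists.mp e.label_isSome
    rw [φ.map_succ e.1 f hf, List.length_map]; exact e.2.isLt⟩⟩

open Classical in
/-- The disconnected graph `D(G,E)`: nodes of `G` plus a fresh unlabeled node `n[i]`
for each edge `(n,i) ∈ E`, with each edge of `E` redirected to its fresh node. -/
noncomputable def D (G : TGraph Ω ar) (E : Set G.Edge) : TGraph Ω ar where
  N := G.N ⊕ {e : G.Edge // e ∈ E}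
  label := Sum.elim G.label fun _ => none
  succ := Sum.elim
    (fun n => List.ofFn fun i : Fin (G.succ n).length =>
      if h : (⟨n, i⟩ : G.Edge) ∈ E then Sum.inr ⟨⟨n, i⟩, h⟩ else Sum.inl ((G.succ n).get i))
    (fun _ => [])
  hlen := by
    rintro (n | e) f h
    · simpa using G.hlen n f h
    · simp at h
  hnone := by
    rintro (n | e) h
    · simp only [Sum.elim_inl] at h ⊢
      simp [List.ofFn_eq_nil_iff, G.hnone n h]
    · rfl

/-- The connection homomorphism `δ_{G,E} : D(G,E) → G`. -/
noncomputable def delta (G : TGraph Ω ar) (E : Set G.Edge) : Hom (G.D E) G where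
  toFun := Sum.elim (fun n => n) (fun e => (G.succ e.1.1).get e.1.2)
  map_label := by
    rintro (n | e) f h
    · exact h
    · simp [D] at h
  map_succ := by
    rintro (n | e) f h
    · simp only [D, Sum.elim_inl, List.map_ofFn]
      apply List.ext_getElem
      · simp
      · intro i h1 h2
        simp only [List.getElem_ofFn, Function.comp_apply]
        split <;> simp [List.get_eq_getElem]
    · simp [D] at h
end TGraph
namespace TGraph
variable {Ω : Type} {ar : Ω → ℕ}

/-- The underlying node map of the disconnected homomorphism `D_{φ,E}`. -/
def dmapFun {G H : TGraph Ω ar} (φ : Hom G H) (E : Set G.Edge) :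
    (G.D E).N → (H.D (φ.edgeMap '' E)).N :=
  Sum.elim (fun n => Sum.inl (φ.toFun n))
    (fun e => Sum.inr ⟨φ.edgeMap e.1, Set.mem_image_of_mem _ e.2⟩)

/-- `μ` is `Ω`-injective if it is injective on labeled nodes. -/
def OmegaInjective {G H : TGraph Ω ar} (μ : Hom G H) : Prop :=
  ∀ n n', (G.label n).isSome → (G.label n').isSome → μ.toFun n = μ.toFun n' → n = n'

/-- The conditions on the right leg `ρ : D(L,E) → R` of an LRR-rewrite rule:
unlabeled nodes of `L` are mapped to unlabeled nodes of `R`, injectively. -/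
def IsLRRRule {L R : TGraph Ω ar} (E : Set L.Edge) (ρ : Hom (L.D E) R) : Prop :=
  (∀ n : L.N, L.label n = none → R.label (ρ.toFun (Sum.inl n)) = none) ∧
  (∀ n n' : L.N, L.label n = none → L.label n' = none →
      ρ.toFun (Sum.inl n) = ρ.toFun (Sum.inl n') → n = n')

section Span
variable {G₀ G₁ G₂ : TGraph Ω ar}

/-- The relation on `N₁ + N₂` generated by a span: `φ₁(n₀) ∼ φ₂(n₀)`. -/
def spanRel (φ₁ : Hom G₀ G₁) (φ₂ : Hom G₀ G₂) : (G₁.N ⊕ G₂.N) → (G₁.N ⊕ G₂.N) → Prop :=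
  fun x y => ∃ n₀, x = Sum.inl (φ₁.toFun n₀) ∧ y = Sum.inr (φ₂.toFun n₀)

/-- Label of a node of the disjoint union. -/
def nodeLabel (G₁ G₂ : TGraph Ω ar) : (G₁.N ⊕ G₂.N) → Option Ω :=
  Sum.elim G₁.label G₂.label

/-- Successors of a node of the disjoint union. -/
def nodeSucc (G₁ G₂ : TGraph Ω ar) : (G₁.N ⊕ G₂.N) → List (G₁.N ⊕ G₂.N) :=
  Sum.elim (fun n => (G₁.succ n).map Sum.inl) (fun n => (G₂.succ n).map Sum.inr)

/-- A span of graphs is strongly labeled if in each equivalence class all labeled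
nodes share the same label and have pairwise equivalent successors. -/
def StronglyLabeled (φ₁ : Hom G₀ G₁) (φ₂ : Hom G₀ G₂) : Prop :=
  ∀ x y, Relation.EqvGen (spanRel φ₁ φ₂) x y →
    ∀ f g, nodeLabel G₁ G₂ x = some f → nodeLabel G₁ G₂ y = some g →
      f = g ∧ List.Forall₂ (Relation.EqvGen (spanRel φ₁ φ₂)) (nodeSucc G₁ G₂ x) (nodeSucc G₁ G₂ y)

open Classical in
/-- The candidate pushout graph of a span: nodes are the quotient of `N₁ + N₂`,
labeled classes are those containing a labeled node, labels and successors are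
taken from a (chosen) labeled representative. -/
noncomputable def pushoutGraph (φ₁ : Hom G₀ G₁) (φ₂ : Hom G₀ G₂) : TGraph Ω ar where
  N := Quot (spanRel φ₁ φ₂)
  label := fun c =>
    if h : ∃ x, Quot.mk _ x = c ∧ (nodeLabel G₁ G₂ x).isSome
    then nodeLabel G₁ G₂ h.choose else none
  succ := fun c =>
    if h : ∃ x, Quot.mk _ x = c ∧ (nodeLabel G₁ G₂ x).isSome
    then (nodeSucc G₁ G₂ h.choose).map (Quot.mk _) else []
  hlen := by
    intro c f h
    try dsimp only at h ⊢
    by_cases hx : ∃ x, Quot.mk _ x = c ∧ (nodeLabel G₁ G₂ x).isSome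
    · rw [dif_pos hx] at h ⊢
      rw [List.length_map]
      rcases hc : hx.choose with n | n <;> rw [hc] at h <;>
        simp only [nodeLabel, nodeSucc, Sum.elim_inl, Sum.elim_inr] at h ⊢ <;>
        rw [List.length_map]
      · exact G₁.hlen n f h
      · exact G₂.hlen n f h
    · rw [dif_neg hx] at h; simp at h
  hnone := by
    intro c h
    try dsimp only at h ⊢
    by_cases hx : ∃ x, Quot.mk _ x = c ∧ (nodeLabel G₁ G₂ x).isSome
    · rw [dif_pos hx] at h
      have := hx.choose_spec.2
      rw [h] at this; simp at this
    · rw [dif_neg hx]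

end Span

open Classical in
/-- The disconnected graph `D̄(G,o)`: `G` plus a fresh unlabeled node `mr`, with
all edges targeting `o` redirected to `mr`. -/
noncomputable def Dbar (G : TGraph Ω ar) (o : G.N) : TGraph Ω ar where
  N := G.N ⊕ Unit
  label := Sum.elim G.label fun _ => none
  succ := Sum.elim
    (fun n => (G.succ n).map fun t => if t = o then Sum.inr () else Sum.inl t)
    (fun _ => [])
  hlen := by
    rintro (n | u) f h
    · simp only [Sum.elim_inl] at h ⊢
      rw [List.length_map]; exact G.hlen n f h
    · simp at h
  hnone := by
    rintro (n | u) h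
    · simp only [Sum.elim_inl] at h ⊢
      rw [G.hnone n h]; rfl
    · rfl

open Classical in
/-- The homomorphism `δ_μ : D̄(G,o) → G`, identity on `N_G`, sending `mr` to `o`. -/
noncomputable def deltaBar (G : TGraph Ω ar) (o : G.N) : Hom (G.Dbar o) G where
  toFun := Sum.elim (fun n => n) fun _ => o
  map_label := by
    rintro (n | u) f h
    · exact h
    · simp [Dbar] at h
  map_succ := by
    rintro (n | u) f h
    · simp only [Dbar, Sum.elim_inl, List.map_map]
      symm
      refine (List.map_congr_left ?_).trans (List.map_id _)
      intro t ht
      by_cases h' : t = o <;> simp [h']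
    · simp [Dbar] at h

open Classical in
/-- The graph obtained from `U` by redirecting all edges targeting `a` towards `b`. -/
noncomputable def redirect (U : TGraph Ω ar) (a b : U.N) : TGraph Ω ar where
  N := U.N
  label := U.label
  succ := fun n => (U.succ n).map fun t => if t = a then b else t
  hlen := by intro n f h; (try dsimp only); rw [List.length_map]; exact U.hlen n f h
  hnone := by intro n h; (try dsimp only); rw [U.hnone n h]; rfl

/-- The graph `P` with two unlabeled nodes: `false` is `ar`, `true` is `pr`. -/
def P (Ω : Type) (ar : Ω → ℕ) : TGraph Ω ar :=
  ⟨Bool, fun _ => none, fun _ => [], fun _ _ h => by simp at h, fun _ _ => rfl⟩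

/-- The switch graph `SW` with three unlabeled nodes: `some false` is `ar`,
`some true` is `pr`, `none` is `mr`. -/
def SW (Ω : Type) (ar : Ω → ℕ) : TGraph Ω ar :=
  ⟨Option Bool, fun _ => none, fun _ => [], fun _ _ h => by simp at h, fun _ _ => rfl⟩

/-- `λ : SW → P`, sending `ar, mr ↦ ar` and `pr ↦ pr`. -/
def lamGR : Hom (SW Ω ar) (P Ω ar) :=
  ⟨fun x => x.getD false, fun _ _ h => by simp [SW] at h, fun _ _ h => by simp [SW] at h⟩

/-- `ρ : SW → P`, sending `ar ↦ ar` and `pr, mr ↦ pr`. -/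
def rhoGR : Hom (SW Ω ar) (P Ω ar) :=
  ⟨fun x => x.getD true, fun _ _ h => by simp [SW] at h, fun _ _ h => by simp [SW] at h⟩

/-- `D̄_μ : SW → D̄(U, μ(ar))`. -/
noncomputable def dbarMu {U : TGraph Ω ar} (μ : Hom (P Ω ar) U) :
    Hom (SW Ω ar) (U.Dbar (μ.toFun false)) where
  toFun := fun x => match x with
    | some b => Sum.inl (μ.toFun b)
    | none => Sum.inr ()
  map_label := fun _ _ h => by simp [SW] at h
  map_succ := fun _ _ h => by simp [SW] at h

/-- A graph with a single unlabeled node. -/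
def oneUnlabeled (Ω : Type) (ar : Ω → ℕ) : TGraph Ω ar :=
  ⟨PUnit, fun _ => none, fun _ => [], fun _ _ h => by simp at h, fun _ _ => rfl⟩

/-- A graph with a single node labeled `a` (looping on itself `ar a` times). -/
def singleLabeled (a : Ω) : TGraph Ω ar :=
  ⟨PUnit, fun _ => some a, fun _ => List.replicate (ar a) PUnit.unit,
   fun _ f h => by cases h; simp, fun _ h => by simp at h⟩

/-- The unique homomorphism from the one-point unlabeled graph to `singleLabeled a`. -/
def toSingle (a : Ω) : Hom (oneUnlabeled Ω ar) (singleLabeled a) :=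
  ⟨fun _ => PUnit.unit, fun _ _ h => by simp [oneUnlabeled] at h,
   fun _ _ h => by simp [oneUnlabeled] at h⟩

end TGraph

namespace LRRAux
open TGraph

variable {Ω : Type} {ar : Ω → ℕ} {L R U : TGraph Ω ar}

/-- Custom extensionality for graph homs. -/
lemma hom_ext {G H : TGraph Ω ar} {φ ψ : Hom G H} (h : φ.toFun = ψ.toFun) : φ = ψ := by
  cases φ; cases ψ; cases h; rfl

lemma edgeMap_fst {G H : TGraph Ω ar} (φ : Hom G H) (e : G.Edge) :
    (φ.edgeMap e).1 = φ.toFun e.1 := rfl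

lemma edgeMap_snd {G H : TGraph Ω ar} (φ : Hom G H) (e : G.Edge) :
    ((φ.edgeMap e).2 : ℕ) = (e.2 : ℕ) := rfl

lemma edgeMap_inj (μ : Hom L U) (hμ : OmegaInjective μ) :
    Function.Injective μ.edgeMap := by
  intro e e' h
  have h1 : μ.toFun e.1 = μ.toFun e'.1 := by
    have := congrArg Sigma.fst h
    simpa [edgeMap_fst] using this
  have he1 : e.1 = e'.1 := hμ _ _ e.label_isSome e'.label_isSome h1
  have h2 : ((μ.edgeMap e).2 : ℕ) = ((μ.edgeMap e').2 : ℕ) := by rw [h]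
  rw [edgeMap_snd, edgeMap_snd] at h2
  obtain ⟨n, i⟩ := e; obtain ⟨n', i'⟩ := e'
  cases he1
  have : i = i' := Fin.ext h2
  rw [this]

lemma succ_map (μ : Hom L U) {n : L.N} {f : Ω} (hf : L.label n = some f) :
    U.succ (μ.toFun n) = (L.succ n).map μ.toFun := μ.map_succ n f hf

lemma edge_mem_iff (μ : Hom L U) (hμ : OmegaInjective μ) (E : Set L.Edge)
    {n : L.N} {f : Ω} (hf : L.label n = some f) (j : ℕ)
    (hj : j < (U.succ (μ.toFun n)).length) (hj' : j < (L.succ n).length) :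
    ((⟨μ.toFun n, ⟨j, hj⟩⟩ : U.Edge) ∈ μ.edgeMap '' E) ↔ (⟨n, ⟨j, hj'⟩⟩ : L.Edge) ∈ E := by
  constructor
  · rintro ⟨e, heE, heq⟩
    have h1 : μ.toFun e.1 = μ.toFun n := by
      have := congrArg Sigma.fst heq; simpa [edgeMap_fst] using this
    have hn : (L.label n).isSome := by rw [hf]; rfl
    have he1 : e.1 = n := hμ _ _ e.label_isSome hn h1
    have h2 : ((μ.edgeMap e).2 : ℕ) = j := by rw [heq]
    rw [edgeMap_snd] at h2
    obtain ⟨m, i⟩ := e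
    cases he1
    have hi : i = ⟨j, hj'⟩ := Fin.ext h2
    rwa [hi] at heE
  · intro hE
    refine ⟨⟨n, ⟨j, hj'⟩⟩, hE, rfl⟩

/-- The disconnected homomorphism `D_{μ,E}`. -/
noncomputable def dHom (μ : Hom L U) (hμ : OmegaInjective μ) (E : Set L.Edge) :
    Hom (L.D E) (U.D (μ.edgeMap '' E)) where
  toFun := dmapFun μ E
  map_label := by
    rintro (n | e) f h
    · exact μ.map_label n f h
    · simp [D] at h
  map_succ := by
    rintro (n | e) f h
    · simp only [D, Sum.elim_inl] at h ⊢
      simp only [dmapFun, Sum.elim_inl, List.map_ofFn]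
      erw [List.map_ofFn, Sum.elim_inl]
      have hUL : (U.succ (μ.toFun n)).length = (L.succ n).length := by
        rw [succ_map μ h, List.length_map]
      apply List.ext_getElem
      · simp [hUL, Sum.elim]
      · intro j hju hjl
        simp only [Sum.elim, List.getElem_ofFn, Function.comp_apply]
        have hju' : j < (U.succ (μ.toFun n)).length := by simpa using hju
        have hjl' : j < (L.succ n).length := by simpa using hjl
        by_cases hE : (⟨n, ⟨j, hjl'⟩⟩ : L.Edge) ∈ E
        · dsimp only [Function.comp]
          erw [dif_pos hE, dif_pos ((edge_mem_iff μ hμ E h j hju' hjl').mpr hE)]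
          rfl
        · dsimp only [Function.comp]
          erw [dif_neg hE, dif_neg (fun hc => hE ((edge_mem_iff μ hμ E h j hju' hjl').mp hc))]
          simp only [dmapFun, Sum.elim_inl, List.get_eq_getElem]
          congr 1
          rw [List.getElem_of_eq (succ_map μ h), List.getElem_map]
    · simp [D] at h

end LRRAux

namespace LRRAux
open TGraph

section Kappa

variable {Ω : Type} {ar : Ω → ℕ} {L R U : TGraph Ω ar}
variable (E : Set L.Edge) (ρ : Hom (L.D E) R) (μ : Hom L U) (hμ : OmegaInjective μ)

/-- Quotient by the span relation of `D_{μ,E}` and `ρ`. -/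
noncomputable abbrev mkq (x : (U.D (μ.edgeMap '' E)).N ⊕ R.N) :
    Quot (spanRel (dHom μ hμ E) ρ) := Quot.mk _ x

/-- Label-and-successor data of a node of the disjoint union, in the quotient. -/
noncomputable def kap' (x : (U.D (μ.edgeMap '' E)).N ⊕ R.N) :
    Option (Ω × List (Quot (spanRel (dHom μ hμ E) ρ))) :=
  (nodeLabel _ _ x).map fun f => (f, (nodeSucc _ _ x).map (mkq E ρ μ hμ))

lemma lemmaA (n : L.N) (f : Ω) (hf : L.label n = some f) :
    U.label (μ.toFun n) = some f ∧ R.label (ρ.toFun (Sum.inl n)) = some f ∧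
    (nodeSucc (U.D (μ.edgeMap '' E)) R (Sum.inl (Sum.inl (μ.toFun n)))).map (mkq E ρ μ hμ)
      = (nodeSucc (U.D (μ.edgeMap '' E)) R (Sum.inr (ρ.toFun (Sum.inl n)))).map (mkq E ρ μ hμ) := by
  have hfD : (L.D E).label (Sum.inl n) = some f := hf
  have hU : U.label (μ.toFun n) = some f := μ.map_label n f hf
  have hR : R.label (ρ.toFun (Sum.inl n)) = some f := ρ.map_label _ f hfD
  refine ⟨hU, hR, ?_⟩
  have hsucc : R.succ (ρ.toFun (Sum.inl n)) = ((L.D E).succ (Sum.inl n)).map ρ.toFun :=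
    ρ.map_succ _ f hfD
  have hUL : (U.succ (μ.toFun n)).length = (L.succ n).length := by
    rw [succ_map μ hf, List.length_map]
  simp only [nodeSucc, Sum.elim_inl, Sum.elim_inr, Sum.elim, hsucc, List.map_map]
  show ((U.D (μ.edgeMap '' E)).succ (Sum.inl (μ.toFun n))).map _ = ((L.D E).succ (Sum.inl n)).map _
  simp only [D, Sum.elim_inl, List.map_ofFn]
  apply List.ext_getElem
  · simp [hUL]
  · intro j hju hjl
    simp only [List.getElem_ofFn, Function.comp_apply]
    have hju' : j < (U.succ (μ.toFun n)).length := by simpa using hju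
    have hjl' : j < (L.succ n).length := by simpa using hjl
    by_cases hE : (⟨n, ⟨j, hjl'⟩⟩ : L.Edge) ∈ E
    · rw [dif_pos hE, dif_pos ((edge_mem_iff μ hμ E hf j hju' hjl').mpr hE)]
      exact Quot.sound ⟨Sum.inr ⟨⟨n, ⟨j, hjl'⟩⟩, hE⟩, rfl, rfl⟩
    · rw [dif_neg hE, dif_neg (fun hc => hE ((edge_mem_iff μ hμ E hf j hju' hjl').mp hc))]
      refine Quot.sound ⟨Sum.inl ((L.succ n).get ⟨j, hjl'⟩), ?_, rfl⟩
      simp only [dmapFun, Sum.elim_inl, List.get_eq_getElem, dHom]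
      congr 2
      rw [List.getElem_of_eq (succ_map μ hf), List.getElem_map]

lemma kap'_A (n : L.N) (f : Ω) (hf : L.label n = some f) :
    kap' E ρ μ hμ (Sum.inl (Sum.inl (μ.toFun n))) = kap' E ρ μ hμ (Sum.inr (ρ.toFun (Sum.inl n))) := by
  obtain ⟨hU, hR, hs⟩ := lemmaA E ρ μ hμ n f hf
  have hDU : (U.D (μ.edgeMap '' E)).label (Sum.inl (μ.toFun n)) = some f := hU
  simp only [kap', nodeLabel, Sum.elim_inl, Sum.elim_inr, Sum.elim, hDU, hR, Option.map_some, hs]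

end Kappa
end LRRAux

namespace LRRAux
open TGraph

section Kappa2

variable {Ω : Type} {ar : Ω → ℕ} {L R U : TGraph Ω ar}
variable (E : Set L.Edge) (ρ : Hom (L.D E) R) (μ : Hom L U) (hμ : OmegaInjective μ)

open Classical in
/-- The class invariant on `R`-nodes. -/
noncomputable def kapR (r0 : R.N) : Option (Ω × List (Quot (spanRel (dHom μ hμ E) ρ))) :=
  if h : ∃ m, ρ.toFun (Sum.inl m) = r0 ∧ (U.label (μ.toFun m)).isSome
  then kap' E ρ μ hμ (Sum.inl (Sum.inl (μ.toFun h.choose)))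
  else kap' E ρ μ hμ (Sum.inr r0)

lemma K0 (hrule : IsLRRRule E ρ) (m : L.N) (r0 : R.N) (hm : ρ.toFun (Sum.inl m) = r0) (hr : (R.label r0).isSome) :
    kap' E ρ μ hμ (Sum.inl (Sum.inl (μ.toFun m))) = kap' E ρ μ hμ (Sum.inr r0) := by
  cases hml : L.label m with
  | some f => subst hm; exact kap'_A E ρ μ hμ m f hml
  | none =>
    exfalso
    have := hrule.1 m hml
    rw [hm, ← Option.not_isSome_iff_eq_none] at this
    exact this hr

lemma K1 (hrule : IsLRRRule E ρ) (r0 : R.N) (hr : (R.label r0).isSome) :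
    kapR E ρ μ hμ r0 = kap' E ρ μ hμ (Sum.inr r0) := by
  unfold kapR
  split
  · next h => exact K0 E ρ μ hμ hrule _ _ h.choose_spec.1 hr
  · rfl

lemma K2 (hrule : IsLRRRule E ρ) (r0 : R.N) (hr : R.label r0 = none) (m : L.N)
    (hm : ρ.toFun (Sum.inl m) = r0) :
    kapR E ρ μ hμ r0 = kap' E ρ μ hμ (Sum.inl (Sum.inl (μ.toFun m))) := by
  unfold kapR
  split
  · next h =>
    obtain ⟨h1, _⟩ := h.choose_spec
    have hm'l : L.label h.choose = none := by
      cases hml : L.label h.choose with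
      | none => rfl
      | some f =>
        have := ρ.map_label (Sum.inl h.choose) f hml
        rw [h1, hr] at this; exact nomatch this
    have hml : L.label m = none := by
      cases hml : L.label m with
      | none => rfl
      | some f =>
        have := ρ.map_label (Sum.inl m) f hml
        rw [hm, hr] at this; exact nomatch this
    have : h.choose = m := hrule.2 _ _ hm'l hml (h1.trans hm.symm)
    rw [this]
  · next h =>
    push_neg at h
    have hUm : U.label (μ.toFun m) = none := by
      cases hopt : U.label (μ.toFun m) with
      | none => rfl
      | some f => exact absurd (by rw [hopt]; rfl) (h m hm)
    have h1 : nodeLabel (U.D (μ.edgeMap '' E)) R (Sum.inl (Sum.inl (μ.toFun m))) = none := hUm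
    have h2 : nodeLabel (U.D (μ.edgeMap '' E)) R (Sum.inr r0) = none := hr
    simp [kap', h1, h2]

/-- The (unique) preimage edge of a fresh node. -/
noncomputable def freshEdge (eh : {e : U.Edge // e ∈ μ.edgeMap '' E}) : {e : L.Edge // e ∈ E} :=
  ⟨((Set.mem_image _ _ _).mp eh.2).choose, ((Set.mem_image _ _ _).mp eh.2).choose_spec.1⟩

lemma freshEdge_spec (eh : {e : U.Edge // e ∈ μ.edgeMap '' E}) :
    μ.edgeMap (freshEdge E μ eh).1 = eh.1 :=
  ((Set.mem_image _ _ _).mp eh.2).choose_spec.2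

/-- The class invariant on all nodes of the disjoint union. -/
noncomputable def kap : ((U.D (μ.edgeMap '' E)).N ⊕ R.N) →
    Option (Ω × List (Quot (spanRel (dHom μ hμ E) ρ)))
  | Sum.inl (Sum.inl u) => kap' E ρ μ hμ (Sum.inl (Sum.inl u))
  | Sum.inl (Sum.inr eh) => kapR E ρ μ hμ (ρ.toFun (Sum.inr (freshEdge E μ eh)))
  | Sum.inr r0 => kapR E ρ μ hμ r0

lemma kap_rel (hrule : IsLRRRule E ρ) {x y : (U.D (μ.edgeMap '' E)).N ⊕ R.N}
    (h : spanRel (dHom μ hμ E) ρ x y) : kap E ρ μ hμ x = kap E ρ μ hμ y := by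
  obtain ⟨n₀, rfl, rfl⟩ := h
  cases n₀ with
  | inl n =>
    show kap' E ρ μ hμ (Sum.inl (Sum.inl (μ.toFun n))) = kapR E ρ μ hμ (ρ.toFun (Sum.inl n))
    cases hR : R.label (ρ.toFun (Sum.inl n)) with
    | none => exact (K2 E ρ μ hμ hrule _ hR n rfl).symm
    | some f =>
      rw [K1 E ρ μ hμ hrule _ (by rw [hR]; rfl)]
      exact K0 E ρ μ hμ hrule n _ rfl (by rw [hR]; rfl)
  | inr e =>
    show kapR E ρ μ hμ (ρ.toFun (Sum.inr (freshEdge E μ ⟨μ.edgeMap e.1, _⟩)))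
        = kapR E ρ μ hμ (ρ.toFun (Sum.inr e))
    congr 2
    have hspec := freshEdge_spec E μ ⟨μ.edgeMap e.1, Set.mem_image_of_mem _ e.2⟩
    have : (freshEdge E μ ⟨μ.edgeMap e.1, Set.mem_image_of_mem _ e.2⟩).1 = e.1 :=
      edgeMap_inj μ hμ hspec
    exact congrArg Sum.inr (Subtype.ext this)

lemma kap_eqvgen (hrule : IsLRRRule E ρ) {x y : (U.D (μ.edgeMap '' E)).N ⊕ R.N}
    (h : Relation.EqvGen (spanRel (dHom μ hμ E) ρ) x y) : kap E ρ μ hμ x = kap E ρ μ hμ y := by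
  induction h with
  | rel _ _ hr => exact kap_rel E ρ μ hμ hrule hr
  | refl => rfl
  | symm _ _ _ ih => exact ih.symm
  | trans _ _ _ _ _ ih1 ih2 => exact ih1.trans ih2

lemma kap_labeled (hrule : IsLRRRule E ρ) (x : (U.D (μ.edgeMap '' E)).N ⊕ R.N) (f : Ω)
    (hf : nodeLabel (U.D (μ.edgeMap '' E)) R x = some f) :
    kap E ρ μ hμ x = some (f, (nodeSucc (U.D (μ.edgeMap '' E)) R x).map (mkq E ρ μ hμ)) := by
  match x with
  | Sum.inl (Sum.inl u) => show kap' E ρ μ hμ _ = _; simp [kap', hf]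
  | Sum.inl (Sum.inr eh) =>
    exfalso
    have : nodeLabel (U.D (μ.edgeMap '' E)) R (Sum.inl (Sum.inr eh)) = none := rfl
    rw [this] at hf; exact nomatch hf
  | Sum.inr r0 =>
    show kapR E ρ μ hμ r0 = _
    rw [K1 E ρ μ hμ hrule r0 (by rw [show R.label r0 = some f from hf]; rfl)]
    simp [kap', hf]

lemma forall2_of_map_eq {α : Type*} {r : α → α → Prop} :
    ∀ (l l' : List α), l.map (Quot.mk r) = l'.map (Quot.mk r) →
      List.Forall₂ (Relation.EqvGen r) l l' := by
  intro l
  induction l with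
  | nil => intro l' h; cases l' with
    | nil => exact List.Forall₂.nil
    | cons b t => simp at h
  | cons a t ih =>
    intro l' h
    cases l' with
    | nil => simp at h
    | cons b t' =>
      simp only [List.map_cons, List.cons.injEq] at h
      exact List.Forall₂.cons (Quot.eq.mp h.1) (ih t' h.2)

lemma stronglyLabeled (hrule : IsLRRRule E ρ) : StronglyLabeled (dHom μ hμ E) ρ := by
  intro x y h f g hf hg
  have hk := kap_eqvgen E ρ μ hμ hrule h
  rw [kap_labeled E ρ μ hμ hrule x f hf, kap_labeled E ρ μ hμ hrule y g hg] at hk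
  simp only [Option.some.injEq, Prod.mk.injEq] at hk
  exact ⟨hk.1, forall2_of_map_eq _ _ hk.2⟩

end Kappa2
end LRRAux

namespace LRRAux
open TGraph CategoryTheory Limits

section Push

variable {Ω : Type} {ar : Ω → ℕ}

lemma pg_eq {G₀ G₁ G₂ : TGraph Ω ar} (φ₁ : Hom G₀ G₁) (φ₂ : Hom G₀ G₂)
    (c : Quot (spanRel φ₁ φ₂))
    (hx : ∃ x, Quot.mk (spanRel φ₁ φ₂) x = c ∧ (nodeLabel G₁ G₂ x).isSome) :
    (pushoutGraph φ₁ φ₂).label c = nodeLabel G₁ G₂ hx.choose ∧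
      (pushoutGraph φ₁ φ₂).succ c = (nodeSucc G₁ G₂ hx.choose).map (Quot.mk _) := by
  classical
  constructor
  · show dite _ _ _ = _
    rw [dif_pos hx]
  · show dite _ _ _ = _
    exact dif_pos hx

lemma pg_none {G₀ G₁ G₂ : TGraph Ω ar} (φ₁ : Hom G₀ G₁) (φ₂ : Hom G₀ G₂)
    (c : Quot (spanRel φ₁ φ₂))
    (hx : ¬ ∃ x, Quot.mk (spanRel φ₁ φ₂) x = c ∧ (nodeLabel G₁ G₂ x).isSome) :
    (pushoutGraph φ₁ φ₂).label c = none := by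
  classical
  show dite _ _ _ = _
  rw [dif_neg hx]

/-- Extract a labeled representative from a labeled class of the pushout graph. -/
lemma pg_label_cases {G₀ G₁ G₂ : TGraph Ω ar} (φ₁ : Hom G₀ G₁) (φ₂ : Hom G₀ G₂)
    (c : Quot (spanRel φ₁ φ₂)) (f : Ω) (h : (pushoutGraph φ₁ φ₂).label c = some f) :
    ∃ x, Quot.mk (spanRel φ₁ φ₂) x = c ∧ nodeLabel G₁ G₂ x = some f ∧
      (pushoutGraph φ₁ φ₂).succ c = (nodeSucc G₁ G₂ x).map (Quot.mk _) := by
  by_cases hx : ∃ x, Quot.mk (spanRel φ₁ φ₂) x = c ∧ (nodeLabel G₁ G₂ x).isSome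
  · obtain ⟨h1, h2⟩ := pg_eq φ₁ φ₂ c hx
    exact ⟨hx.choose, hx.choose_spec.1, by rw [← h1, h], h2⟩
  · rw [pg_none φ₁ φ₂ c hx] at h
    exact nomatch h

section Specific

variable {L R U : TGraph Ω ar}
variable (E : Set L.Edge) (ρ : Hom (L.D E) R) (μ : Hom L U) (hμ : OmegaInjective μ)

lemma class_consistent (hrule : IsLRRRule E ρ)
    {x x' : (U.D (μ.edgeMap '' E)).N ⊕ R.N} {f g : Ω}
    (hq : Quot.mk (spanRel (dHom μ hμ E) ρ) x = Quot.mk (spanRel (dHom μ hμ E) ρ) x')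
    (hf : nodeLabel (U.D (μ.edgeMap '' E)) R x = some f)
    (hg : nodeLabel (U.D (μ.edgeMap '' E)) R x' = some g) :
    f = g ∧ (nodeSucc (U.D (μ.edgeMap '' E)) R x).map (mkq E ρ μ hμ)
      = (nodeSucc (U.D (μ.edgeMap '' E)) R x').map (mkq E ρ μ hμ) := by
  have hk := kap_eqvgen E ρ μ hμ hrule (Quot.eq.mp hq)
  rw [kap_labeled E ρ μ hμ hrule x f hf, kap_labeled E ρ μ hμ hrule x' g hg] at hk
  simpa using hk

lemma pg_spec (hrule : IsLRRRule E ρ) (x : (U.D (μ.edgeMap '' E)).N ⊕ R.N) (f : Ω)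
    (hf : nodeLabel (U.D (μ.edgeMap '' E)) R x = some f) :
    (pushoutGraph (dHom μ hμ E) ρ).label (Quot.mk _ x) = some f ∧
      (pushoutGraph (dHom μ hμ E) ρ).succ (Quot.mk _ x)
        = (nodeSucc (U.D (μ.edgeMap '' E)) R x).map (Quot.mk _) := by
  have hx : ∃ y, Quot.mk (spanRel (dHom μ hμ E) ρ) y = Quot.mk (spanRel (dHom μ hμ E) ρ) x ∧
      (nodeLabel (U.D (μ.edgeMap '' E)) R y).isSome := ⟨x, rfl, by rw [hf]; rfl⟩
  obtain ⟨h1, h2⟩ := pg_eq (dHom μ hμ E) ρ _ hx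
  obtain ⟨hs1, hs2⟩ := hx.choose_spec
  obtain ⟨g, hg⟩ := Option.isSome_iff_exists.mp hs2
  obtain ⟨hgf, hmap⟩ := class_consistent E ρ μ hμ hrule hs1 hg hf
  constructor
  · rw [h1, hg, hgf]
  · rw [h2, hmap]

/-- The left inclusion into the pushout graph. -/
noncomputable def iOne (hrule : IsLRRRule E ρ) :
    Hom (U.D (μ.edgeMap '' E)) (pushoutGraph (dHom μ hμ E) ρ) where
  toFun := fun n => Quot.mk _ (Sum.inl n)
  map_label := fun n f h => (pg_spec E ρ μ hμ hrule (Sum.inl n) f h).1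
  map_succ := by
    intro n f h
    rw [(pg_spec E ρ μ hμ hrule (Sum.inl n) f h).2]
    simp [nodeSucc, List.map_map, Function.comp_def]
    rfl

/-- The right inclusion into the pushout graph. -/
noncomputable def iTwo (hrule : IsLRRRule E ρ) :
    Hom R (pushoutGraph (dHom μ hμ E) ρ) where
  toFun := fun n => Quot.mk _ (Sum.inr n)
  map_label := fun n f h => (pg_spec E ρ μ hμ hrule (Sum.inr n) f h).1
  map_succ := by
    intro n f h
    rw [(pg_spec E ρ μ hμ hrule (Sum.inr n) f h).2]
    simp [nodeSucc, List.map_map, Function.comp_def]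
    rfl

lemma comm_sq (hrule : IsLRRRule E ρ) :
    Hom.comp (dHom μ hμ E) (iOne E ρ μ hμ hrule) = Hom.comp ρ (iTwo E ρ μ hμ hrule) := by
  apply hom_ext
  funext n₀
  exact Quot.sound ⟨n₀, rfl, rfl⟩

end Specific
end Push
end LRRAux

namespace LRRAux
open TGraph CategoryTheory Limits

section Desc

variable {Ω : Type} {ar : Ω → ℕ} {L R U : TGraph Ω ar}
variable (E : Set L.Edge) (ρ : Hom (L.D E) R) (μ : Hom L U) (hμ : OmegaInjective μ)

/-- The mediating homomorphism out of the pushout graph. -/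
noncomputable def descHom (s : PushoutCocone (C := TGraph Ω ar) (dHom μ hμ E) ρ) :
    Hom (pushoutGraph (dHom μ hμ E) ρ) s.pt where
  toFun := Quot.lift (Sum.elim (TGraph.Hom.toFun s.inl) (TGraph.Hom.toFun s.inr)) (by
    intro x y hxy
    unfold spanRel at hxy
    obtain ⟨n₀, rfl, rfl⟩ := hxy
    have := congrFun (congrArg TGraph.Hom.toFun s.condition) n₀
    exact this)
  map_label := by
    intro c f hc
    obtain ⟨x, hmk, hlab, hsucc⟩ := pg_label_cases (dHom μ hμ E) ρ c f hc
    subst hmk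
    cases x with
    | inl n => exact (s.inl).map_label n f hlab
    | inr r0 => exact (s.inr).map_label r0 f hlab
  map_succ := by
    intro c f hc
    obtain ⟨x, hmk, hlab, hsucc⟩ := pg_label_cases (dHom μ hμ E) ρ c f hc
    subst hmk
    rw [hsucc]; erw [List.map_map]
    cases x with
    | inl n =>
      refine Eq.trans ((s.inl).map_succ n f hlab) ?_
      simp [nodeSucc, List.map_map, Function.comp_def]
      exact fun _ _ => rfl
    | inr r0 =>
      refine Eq.trans ((s.inr).map_succ r0 f hlab) ?_
      simp [nodeSucc, List.map_map, Function.comp_def]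
      exact fun _ _ => rfl

end Desc
end LRRAux

/-- For an LRR-rewrite rule `L ← D(L,E) → R` and an Ω-injective matching
`μ : L → U`, the span `D(U,μ(E)) ← D(L,E) → R` (legs `D_{μ,E}` and `ρ`) is strongly
labeled, hence has a pushout in the category of graphs. -/
theorem lrr_span_strongly_labeled {Ω : Type} {ar : Ω → ℕ} {L R U : TGraph Ω ar}
    (E : Set L.Edge) (ρ : TGraph.Hom (L.D E) R) (hrule : TGraph.IsLRRRule E ρ)
    (μ : TGraph.Hom L U) (hμ : TGraph.OmegaInjective μ) :
    ∃ d : TGraph.Hom (L.D E) (U.D (μ.edgeMap '' E)),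
      d.toFun = TGraph.dmapFun μ E ∧
      TGraph.StronglyLabeled d ρ ∧
      ∃ (V : TGraph Ω ar) (i₁ : TGraph.Hom (U.D (μ.edgeMap '' E)) V)
        (i₂ : TGraph.Hom R V), IsPushout (C := TGraph Ω ar) d ρ i₁ i₂ := by
  classical
  open LRRAux TGraph Limits in
  refine ⟨dHom μ hμ E, rfl, stronglyLabeled E ρ μ hμ hrule,
    pushoutGraph (dHom μ hμ E) ρ, iOne E ρ μ hμ hrule, iTwo E ρ μ hμ hrule, ?_⟩
  have hcolim : IsColimit (PushoutCocone.mk (C := TGraph Ω ar)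
      (iOne E ρ μ hμ hrule) (iTwo E ρ μ hμ hrule) (comm_sq E ρ μ hμ hrule)) := by
    refine PushoutCocone.IsColimit.mk _ (fun s => descHom E ρ μ hμ s) ?_ ?_ ?_
    · intro s
      apply LRRAux.hom_ext
      funext n
      rfl
    · intro s
      apply LRRAux.hom_ext
      funext n
      rfl
    · intro s m h1 h2
      apply LRRAux.hom_ext
      funext c
      induction c using Quot.ind with
      | _ x =>
        cases x with
        | inl n => exact congrFun (congrArg TGraph.Hom.toFun h1) n
        | inr r0 => exact congrFun (congrArg TGraph.Hom.toFun h2) r0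
  exact IsPushout.of_isColimit hcolim
end

section
/- Let L ← D(L,E) → R be an LRR-rewrite rule and μ : L → U an Ω-injective matching, and let V (with ν : R → V, ρ' : D(U,μ(E)) → V) be the pushout of the span D(U,μ(E)) ← D(L,E) → R. Then representatives of the equivalence classes of N_R + N_{D(U,μ(E))} can be chosen so that the set of labeled nodes of V satisfies N_V^Ω = (N_U^Ω − μ(N_L^Ω)) + N_R^Ω; in particular, ν is injective on labeled nodes of R, ρ' is injective on the labeled nodes of U not in the image μ(N_L^Ω), and these two sets of images are disjoint and cover N_V^Ω. -/
open CategoryTheory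

/-- A graph over a signature `Ω` with arity function `ar`: nodes, an (implicit) subset of
labeled nodes (those where `label` is `some`), and a successor function assigning to each
labeled node a string of nodes whose length is the arity of its label. Unlabeled nodes
have no successors. -/
structure LGraph (Ω : Type) (ar : Ω → ℕ) where
  N : Type
  label : N → Option Ω
  succ : N → List N
  hlen : ∀ n f, label n = some f → (succ n).length = ar f
  hnone : ∀ n, label n = none → succ n = []

namespace LGraph

variable {Ω : Type} {ar : Ω → ℕ}

/-- A graph homomorphism: a map on nodes preserving labeledness, labels and successors. -/
@[ext]
structure Hom (G H : LGraph Ω ar) where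
  toFun : G.N → H.N
  map_label : ∀ n f, G.label n = some f → H.label (toFun n) = some f
  map_succ : ∀ n f, G.label n = some f → H.succ (toFun n) = (G.succ n).map toFun

def Hom.id (G : LGraph Ω ar) : Hom G G :=
  ⟨fun n => n, fun _ _ h => h, fun n _ _ => by simp⟩

def Hom.comp {G H K : LGraph Ω ar} (φ : Hom G H) (ψ : Hom H K) : Hom G K where
  toFun := fun n => ψ.toFun (φ.toFun n)
  map_label := fun n f h => ψ.map_label _ f (φ.map_label n f h)
  map_succ := fun n f h => by
    rw [ψ.map_succ _ f (φ.map_label n f h), φ.map_succ n f h, List.map_map]; rfl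

instance : Category (LGraph Ω ar) where
  Hom := Hom
  id := Hom.id
  comp := Hom.comp
  id_comp := by intros; rfl
  comp_id := by intros; rfl
  assoc := by intros; rfl

/-- An edge of a graph: a labeled node together with a position among its successors. -/
def Edge (G : LGraph Ω ar) := Σ n : G.N, Fin (G.succ n).length

lemma Edge.label_isSome {G : LGraph Ω ar} (e : G.Edge) : (G.label e.1).isSome := by
  have h2 : 0 < (G.succ e.1).length := Nat.lt_of_le_of_lt (Nat.zero_le _) e.2.isLt
  cases hl : G.label e.1 with
  | none => rw [G.hnone e.1 hl] at h2; simp at h2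
  | some f => rfl

/-- The image of an edge under a homomorphism. -/
def Hom.edgeMap {G H : LGraph Ω ar} (φ : Hom G H) (e : G.Edge) : H.Edge :=
  ⟨φ.toFun e.1, ⟨e.2, by
    obtain ⟨f, hf⟩ := Option.isSome_iff_exists.mp e.label_isSome
    rw [φ.map_succ e.1 f hf, List.length_map]; exact e.2.isLt⟩⟩

open Classical in
/-- The disconnected graph `D(G,E)`: nodes of `G` plus a fresh unlabeled node `n[i]`
for each edge `(n,i) ∈ E`, with each edge of `E` redirected to its fresh node. -/
noncomputable def D (G : LGraph Ω ar) (E : Set G.Edge) : LGraph Ω ar where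
  N := G.N ⊕ {e : G.Edge // e ∈ E}
  label := Sum.elim G.label fun _ => none
  succ := Sum.elim
    (fun n => List.ofFn fun i : Fin (G.succ n).length =>
      if h : (⟨n, i⟩ : G.Edge) ∈ E then Sum.inr ⟨⟨n, i⟩, h⟩ else Sum.inl ((G.succ n).get i))
    (fun _ => [])
  hlen := by
    rintro (n | e) f h
    · simpa using G.hlen n f h
    · simp at h
  hnone := by
    rintro (n | e) h
    · simp only [Sum.elim_inl] at h ⊢
      simp [List.ofFn_eq_nil_iff, G.hnone n h]
    · rfl

/-- The connection homomorphism `δ_{G,E} : D(G,E) → G`. -/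
noncomputable def delta (G : LGraph Ω ar) (E : Set G.Edge) : Hom (G.D E) G where
  toFun := Sum.elim (fun n => n) (fun e => (G.succ e.1.1).get e.1.2)
  map_label := by
    rintro (n | e) f h
    · exact h
    · simp [D] at h
  map_succ := by
    rintro (n | e) f h
    · simp only [D, Sum.elim_inl, List.map_ofFn]
      apply List.ext_getElem
      · simp
      · intro i h1 h2
        simp only [List.getElem_ofFn, Function.comp_apply]
        split <;> simp [List.get_eq_getElem]
    · simp [D] at h
end LGraph
namespace LGraph
variable {Ω : Type} {ar : Ω → ℕ}

/-- The underlying node map of the disconnected homomorphism `D_{φ,E}`. -/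
def dmapFun {G H : LGraph Ω ar} (φ : Hom G H) (E : Set G.Edge) :
    (G.D E).N → (H.D (φ.edgeMap '' E)).N :=
  Sum.elim (fun n => Sum.inl (φ.toFun n))
    (fun e => Sum.inr ⟨φ.edgeMap e.1, Set.mem_image_of_mem _ e.2⟩)

/-- `μ` is `Ω`-injective if it is injective on labeled nodes. -/
def OmegaInjective {G H : LGraph Ω ar} (μ : Hom G H) : Prop :=
  ∀ n n', (G.label n).isSome → (G.label n').isSome → μ.toFun n = μ.toFun n' → n = n'

/-- The conditions on the right leg `ρ : D(L,E) → R` of an LRR-rewrite rule: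
unlabeled nodes of `L` are mapped to unlabeled nodes of `R`, injectively. -/
def IsLRRRule {L R : LGraph Ω ar} (E : Set L.Edge) (ρ : Hom (L.D E) R) : Prop :=
  (∀ n : L.N, L.label n = none → R.label (ρ.toFun (Sum.inl n)) = none) ∧
  (∀ n n' : L.N, L.label n = none → L.label n' = none →
      ρ.toFun (Sum.inl n) = ρ.toFun (Sum.inl n') → n = n')

section Span
variable {G₀ G₁ G₂ : LGraph Ω ar}

/-- The relation on `N₁ + N₂` generated by a span: `φ₁(n₀) ∼ φ₂(n₀)`. -/
def spanRel (φ₁ : Hom G₀ G₁) (φ₂ : Hom G₀ G₂) : (G₁.N ⊕ G₂.N) → (G₁.N ⊕ G₂.N) → Prop :=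
  fun x y => ∃ n₀, x = Sum.inl (φ₁.toFun n₀) ∧ y = Sum.inr (φ₂.toFun n₀)

/-- Label of a node of the disjoint union. -/
def nodeLabel (G₁ G₂ : LGraph Ω ar) : (G₁.N ⊕ G₂.N) → Option Ω :=
  Sum.elim G₁.label G₂.label

/-- Successors of a node of the disjoint union. -/
def nodeSucc (G₁ G₂ : LGraph Ω ar) : (G₁.N ⊕ G₂.N) → List (G₁.N ⊕ G₂.N) :=
  Sum.elim (fun n => (G₁.succ n).map Sum.inl) (fun n => (G₂.succ n).map Sum.inr)

/-- A span of graphs is strongly labeled if in each equivalence class all labeled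
nodes share the same label and have pairwise equivalent successors. -/
def StronglyLabeled (φ₁ : Hom G₀ G₁) (φ₂ : Hom G₀ G₂) : Prop :=
  ∀ x y, Relation.EqvGen (spanRel φ₁ φ₂) x y →
    ∀ f g, nodeLabel G₁ G₂ x = some f → nodeLabel G₁ G₂ y = some g →
      f = g ∧ List.Forall₂ (Relation.EqvGen (spanRel φ₁ φ₂)) (nodeSucc G₁ G₂ x) (nodeSucc G₁ G₂ y)

open Classical in
/-- The candidate pushout graph of a span: nodes are the quotient of `N₁ + N₂`,
labeled classes are those containing a labeled node, labels and successors are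
taken from a (chosen) labeled representative. -/
noncomputable def pushoutGraph (φ₁ : Hom G₀ G₁) (φ₂ : Hom G₀ G₂) : LGraph Ω ar where
  N := Quot (spanRel φ₁ φ₂)
  label := fun c =>
    if h : ∃ x, Quot.mk _ x = c ∧ (nodeLabel G₁ G₂ x).isSome
    then nodeLabel G₁ G₂ h.choose else none
  succ := fun c =>
    if h : ∃ x, Quot.mk _ x = c ∧ (nodeLabel G₁ G₂ x).isSome
    then (nodeSucc G₁ G₂ h.choose).map (Quot.mk _) else []
  hlen := by
    intro c f h
    try dsimp only at h ⊢
    by_cases hx : ∃ x, Quot.mk _ x = c ∧ (nodeLabel G₁ G₂ x).isSome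
    · rw [dif_pos hx] at h ⊢
      rw [List.length_map]
      rcases hc : hx.choose with n | n <;> rw [hc] at h <;>
        simp only [nodeLabel, nodeSucc, Sum.elim_inl, Sum.elim_inr] at h ⊢ <;>
        rw [List.length_map]
      · exact G₁.hlen n f h
      · exact G₂.hlen n f h
    · rw [dif_neg hx] at h; simp at h
  hnone := by
    intro c h
    try dsimp only at h ⊢
    by_cases hx : ∃ x, Quot.mk _ x = c ∧ (nodeLabel G₁ G₂ x).isSome
    · rw [dif_pos hx] at h
      have := hx.choose_spec.2
      rw [h] at this; simp at this
    · rw [dif_neg hx]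

end Span

open Classical in
/-- The disconnected graph `D̄(G,o)`: `G` plus a fresh unlabeled node `mr`, with
all edges targeting `o` redirected to `mr`. -/
noncomputable def Dbar (G : LGraph Ω ar) (o : G.N) : LGraph Ω ar where
  N := G.N ⊕ Unit
  label := Sum.elim G.label fun _ => none
  succ := Sum.elim
    (fun n => (G.succ n).map fun t => if t = o then Sum.inr () else Sum.inl t)
    (fun _ => [])
  hlen := by
    rintro (n | u) f h
    · simp only [Sum.elim_inl] at h ⊢
      rw [List.length_map]; exact G.hlen n f h
    · simp at h
  hnone := by
    rintro (n | u) h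
    · simp only [Sum.elim_inl] at h ⊢
      rw [G.hnone n h]; rfl
    · rfl

open Classical in
/-- The homomorphism `δ_μ : D̄(G,o) → G`, identity on `N_G`, sending `mr` to `o`. -/
noncomputable def deltaBar (G : LGraph Ω ar) (o : G.N) : Hom (G.Dbar o) G where
  toFun := Sum.elim (fun n => n) fun _ => o
  map_label := by
    rintro (n | u) f h
    · exact h
    · simp [Dbar] at h
  map_succ := by
    rintro (n | u) f h
    · simp only [Dbar, Sum.elim_inl, List.map_map]
      symm
      refine (List.map_congr_left ?_).trans (List.map_id _)
      intro t ht
      by_cases h' : t = o <;> simp [h']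
    · simp [Dbar] at h

open Classical in
/-- The graph obtained from `U` by redirecting all edges targeting `a` towards `b`. -/
noncomputable def redirect (U : LGraph Ω ar) (a b : U.N) : LGraph Ω ar where
  N := U.N
  label := U.label
  succ := fun n => (U.succ n).map fun t => if t = a then b else t
  hlen := by intro n f h; (try dsimp only); rw [List.length_map]; exact U.hlen n f h
  hnone := by intro n h; (try dsimp only); rw [U.hnone n h]; rfl

/-- The graph `P` with two unlabeled nodes: `false` is `ar`, `true` is `pr`. -/
def P (Ω : Type) (ar : Ω → ℕ) : LGraph Ω ar :=
  ⟨Bool, fun _ => none, fun _ => [], fun _ _ h => by simp at h, fun _ _ => rfl⟩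

/-- The switch graph `SW` with three unlabeled nodes: `some false` is `ar`,
`some true` is `pr`, `none` is `mr`. -/
def SW (Ω : Type) (ar : Ω → ℕ) : LGraph Ω ar :=
  ⟨Option Bool, fun _ => none, fun _ => [], fun _ _ h => by simp at h, fun _ _ => rfl⟩

/-- `λ : SW → P`, sending `ar, mr ↦ ar` and `pr ↦ pr`. -/
def lamGR : Hom (SW Ω ar) (P Ω ar) :=
  ⟨fun x => x.getD false, fun _ _ h => by simp [SW] at h, fun _ _ h => by simp [SW] at h⟩

/-- `ρ : SW → P`, sending `ar ↦ ar` and `pr, mr ↦ pr`. -/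
def rhoGR : Hom (SW Ω ar) (P Ω ar) :=
  ⟨fun x => x.getD true, fun _ _ h => by simp [SW] at h, fun _ _ h => by simp [SW] at h⟩

/-- `D̄_μ : SW → D̄(U, μ(ar))`. -/
noncomputable def dbarMu {U : LGraph Ω ar} (μ : Hom (P Ω ar) U) :
    Hom (SW Ω ar) (U.Dbar (μ.toFun false)) where
  toFun := fun x => match x with
    | some b => Sum.inl (μ.toFun b)
    | none => Sum.inr ()
  map_label := fun _ _ h => by simp [SW] at h
  map_succ := fun _ _ h => by simp [SW] at h

/-- A graph with a single unlabeled node. -/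
def oneUnlabeled (Ω : Type) (ar : Ω → ℕ) : LGraph Ω ar :=
  ⟨PUnit, fun _ => none, fun _ => [], fun _ _ h => by simp at h, fun _ _ => rfl⟩

/-- A graph with a single node labeled `a` (looping on itself `ar a` times). -/
def singleLabeled (a : Ω) : LGraph Ω ar :=
  ⟨PUnit, fun _ => some a, fun _ => List.replicate (ar a) PUnit.unit,
   fun _ f h => by cases h; simp, fun _ h => by simp at h⟩

/-- The unique homomorphism from the one-point unlabeled graph to `singleLabeled a`. -/
def toSingle (a : Ω) : Hom (oneUnlabeled Ω ar) (singleLabeled a) :=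
  ⟨fun _ => PUnit.unit, fun _ _ h => by simp [oneUnlabeled] at h,
   fun _ _ h => by simp [oneUnlabeled] at h⟩

end LGraph

namespace GraphAux

open LGraph

variable {Ω : Type} {ar : Ω → ℕ} {L R U : LGraph Ω ar}

lemma label_D_inl (G : LGraph Ω ar) (E : Set G.Edge) (n : G.N) :
    (G.D E).label (Sum.inl n) = G.label n := rfl

lemma edgeMap_inj (μ : Hom L U) (hμ : OmegaInjective μ) :
    Function.Injective μ.edgeMap := by
  rintro ⟨n, i⟩ ⟨n', i'⟩ h
  have h1 : μ.toFun n = μ.toFun n' := congrArg Sigma.fst h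
  have hn : n = n' := hμ _ _ (Edge.label_isSome ⟨n, i⟩) (Edge.label_isSome ⟨n', i'⟩) h1
  subst hn
  have h4 : (i : ℕ) = (i' : ℕ) := by
    have := congrArg (fun e : U.Edge => (e.2 : ℕ)) h
    simpa [Hom.edgeMap] using this
  exact Sigma.ext rfl (heq_of_eq (Fin.ext h4))

open Classical in
/-- Anchor of a `U`-node. -/
noncomputable def invU {E : Set L.Edge} (ρ : Hom (L.D E) R) (μ : Hom L U) (u : U.N) :
    Option (R.N ⊕ U.N) :=
  if (U.label u).isSome then
    if hm : ∃ m, (L.label m).isSome ∧ μ.toFun m = u then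
      some (Sum.inl (ρ.toFun (Sum.inl hm.choose)))
    else some (Sum.inr u)
  else none

open Classical in
/-- Anchor of an `R`-node. -/
noncomputable def invR (E : Set L.Edge) (ρ : Hom (L.D E) R) (μ : Hom L U) (r : R.N) :
    Option (R.N ⊕ U.N) :=
  if (R.label r).isSome then some (Sum.inl r)
  else if hn : ∃ n, L.label n = none ∧ ρ.toFun (Sum.inl n) = r then
    invU ρ μ (μ.toFun hn.choose)
  else none

open Classical in
/-- Anchor of a node of the disjoint union `D(U,μ(E)) + R`. -/
noncomputable def invX (E : Set L.Edge) (ρ : Hom (L.D E) R) (μ : Hom L U) :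
    ((U.D (μ.edgeMap '' E)).N ⊕ R.N) → Option (R.N ⊕ U.N) :=
  Sum.elim
    (Sum.elim (invU ρ μ)
      (fun eh => invR E ρ μ (ρ.toFun (Sum.inr ⟨eh.2.choose, eh.2.choose_spec.1⟩))))
    (invR E ρ μ)

lemma invX_rel {E : Set L.Edge} {ρ : Hom (L.D E) R} {μ : Hom L U}
    (hrule : IsLRRRule E ρ) (hμ : OmegaInjective μ)
    {d : Hom (L.D E) (U.D (μ.edgeMap '' E))} (hd : d.toFun = dmapFun μ E) :
    ∀ x y, spanRel d ρ x y → invX E ρ μ x = invX E ρ μ y := by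
  rintro x y ⟨n₀, rfl, rfl⟩
  rw [hd]
  cases n₀ with
  | inl n =>
    show invU ρ μ (μ.toFun n) = invR E ρ μ (ρ.toFun (Sum.inl n))
    by_cases hl : (L.label n).isSome
    · obtain ⟨f, hf⟩ := Option.isSome_iff_exists.mp hl
      have hRl : (R.label (ρ.toFun (Sum.inl n))).isSome := by
        rw [ρ.map_label (Sum.inl n) f hf]; rfl
      have hUl : (U.label (μ.toFun n)).isSome := by
        rw [μ.map_label n f hf]; rfl
      have hm : ∃ m, (L.label m).isSome ∧ μ.toFun m = μ.toFun n := ⟨n, hl, rfl⟩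
      have hmc : hm.choose = n :=
        hμ _ _ hm.choose_spec.1 hl hm.choose_spec.2
      rw [invU, if_pos hUl, dif_pos hm, invR, if_pos hRl, hmc]
    · have hln : L.label n = none := by
        cases h : L.label n with
        | none => rfl
        | some f => rw [h] at hl; simp at hl
      have hRl : R.label (ρ.toFun (Sum.inl n)) = none := hrule.1 n hln
      have hn : ∃ m, L.label m = none ∧ ρ.toFun (Sum.inl m) = ρ.toFun (Sum.inl n) :=
        ⟨n, hln, rfl⟩
      have hnc : hn.choose = n :=
        hrule.2 _ _ hn.choose_spec.1 hln hn.choose_spec.2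
      rw [invR, if_neg (by simp [hRl]), dif_pos hn, hnc]
  | inr e =>
    have hmem : μ.edgeMap e.1 ∈ μ.edgeMap '' E := Set.mem_image_of_mem _ e.2
    have key : (⟨hmem.choose, hmem.choose_spec.1⟩ : {e' // e' ∈ E}) = e :=
      Subtype.ext (edgeMap_inj μ hμ hmem.choose_spec.2)
    show invR E ρ μ (ρ.toFun (Sum.inr ⟨hmem.choose, hmem.choose_spec.1⟩)) =
      invR E ρ μ (ρ.toFun (Sum.inr e))
    rw [key]

lemma invX_eqv {E : Set L.Edge} {ρ : Hom (L.D E) R} {μ : Hom L U}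
    (hrule : IsLRRRule E ρ) (hμ : OmegaInjective μ)
    {d : Hom (L.D E) (U.D (μ.edgeMap '' E))} (hd : d.toFun = dmapFun μ E)
    {x y : (U.D (μ.edgeMap '' E)).N ⊕ R.N}
    (h : Relation.EqvGen (spanRel d ρ) x y) : invX E ρ μ x = invX E ρ μ y := by
  induction h with
  | rel x y h => exact invX_rel hrule hμ hd x y h
  | refl => rfl
  | symm _ _ _ ih => exact ih.symm
  | trans _ _ _ _ _ ih1 ih2 => exact ih1.trans ih2

end GraphAux

/-- Description of the labeled nodes of the pushout `V` of the span
`D(U,μ(E)) ← D(L,E) → R`: `N_V^Ω = (N_U^Ω − μ(N_L^Ω)) + N_R^Ω`. The quotient map is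
injective on labeled nodes of `R` and on labeled nodes of `U` outside `μ(N_L^Ω)`,
these two families are disjoint, and together they cover all labeled nodes of `V`. -/
theorem labeled_nodes_of_rewrite_pushout {Ω : Type} {ar : Ω → ℕ} {L R U : LGraph Ω ar}
    (E : Set L.Edge) (ρ : LGraph.Hom (L.D E) R) (hrule : LGraph.IsLRRRule E ρ)
    (μ : LGraph.Hom L U) (hμ : LGraph.OmegaInjective μ) :
    ∀ d : LGraph.Hom (L.D E) (U.D (μ.edgeMap '' E)), d.toFun = LGraph.dmapFun μ E →
      ((∀ n n' : R.N, (R.label n).isSome → (R.label n').isSome →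
          Quot.mk (LGraph.spanRel d ρ) (Sum.inr n) = Quot.mk (LGraph.spanRel d ρ) (Sum.inr n') →
          n = n') ∧
       (∀ u u' : U.N, (U.label u).isSome → (U.label u').isSome →
          (∀ nL, (L.label nL).isSome → μ.toFun nL ≠ u) →
          (∀ nL, (L.label nL).isSome → μ.toFun nL ≠ u') →
          Quot.mk (LGraph.spanRel d ρ) (Sum.inl (Sum.inl u)) =
            Quot.mk (LGraph.spanRel d ρ) (Sum.inl (Sum.inl u')) → u = u') ∧
       (∀ u : U.N, (U.label u).isSome → (∀ nL, (L.label nL).isSome → μ.toFun nL ≠ u) →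
          ∀ n : R.N, (R.label n).isSome →
          Quot.mk (LGraph.spanRel d ρ) (Sum.inl (Sum.inl u)) ≠
            Quot.mk (LGraph.spanRel d ρ) (Sum.inr n)) ∧
       (∀ c : (LGraph.pushoutGraph d ρ).N, ((LGraph.pushoutGraph d ρ).label c).isSome →
          (∃ n : R.N, (R.label n).isSome ∧ c = Quot.mk (LGraph.spanRel d ρ) (Sum.inr n)) ∨
          (∃ u : U.N, (U.label u).isSome ∧ (∀ nL, (L.label nL).isSome → μ.toFun nL ≠ u) ∧
            c = Quot.mk (LGraph.spanRel d ρ) (Sum.inl (Sum.inl u))))) := by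
  intro d hd
  have inv_eq : ∀ x y, Quot.mk (LGraph.spanRel d ρ) x = Quot.mk (LGraph.spanRel d ρ) y →
      GraphAux.invX E ρ μ x = GraphAux.invX E ρ μ y := fun x y h =>
    GraphAux.invX_eqv hrule hμ hd (Quot.eqvGen_exact h)
  refine ⟨?_, ?_, ?_, ?_⟩
  · intro n n' h h' hq
    have key := inv_eq _ _ hq
    simp only [GraphAux.invX, Sum.elim_inr] at key
    change GraphAux.invR E ρ μ n = GraphAux.invR E ρ μ n' at key
    rw [GraphAux.invR, if_pos h, GraphAux.invR, if_pos h'] at key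
    simpa using key
  · intro u u' hu hu' hnu hnu' hq
    have key := inv_eq _ _ hq
    simp only [GraphAux.invX, Sum.elim_inl] at key
    change GraphAux.invU ρ μ u = GraphAux.invU ρ μ u' at key
    rw [GraphAux.invU, if_pos hu, dif_neg (fun ⟨m, hm1, hm2⟩ => hnu m hm1 hm2),
      GraphAux.invU, if_pos hu', dif_neg (fun ⟨m, hm1, hm2⟩ => hnu' m hm1 hm2)] at key
    simpa using key
  · intro u hu hnu n hn hq
    have key := inv_eq _ _ hq
    simp only [GraphAux.invX, Sum.elim_inl, Sum.elim_inr] at key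
    change GraphAux.invU ρ μ u = GraphAux.invR E ρ μ n at key
    rw [GraphAux.invU, if_pos hu, dif_neg (fun ⟨m, hm1, hm2⟩ => hnu m hm1 hm2),
      GraphAux.invR, if_pos hn] at key
    simp at key
  · intro c hc
    have hx : ∃ x, Quot.mk (LGraph.spanRel d ρ) x = c ∧
        (LGraph.nodeLabel (U.D (μ.edgeMap '' E)) R x).isSome := by
      by_contra hcon
      simp only [LGraph.pushoutGraph, dif_neg hcon] at hc
      simp at hc
    obtain ⟨x, hxc, hxl⟩ := hx
    rcases x with (u | eh) | n
    · have hu : (U.label u).isSome := hxl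
      by_cases hm : ∃ m, (L.label m).isSome ∧ μ.toFun m = u
      · obtain ⟨m, hm1, hm2⟩ := hm
        obtain ⟨f, hf⟩ := Option.isSome_iff_exists.mp hm1
        refine Or.inl ⟨ρ.toFun (Sum.inl m), ?_, ?_⟩
        · rw [ρ.map_label (Sum.inl m) f hf]; rfl
        · have h1 : (Sum.inl (Sum.inl u) : (U.D (μ.edgeMap '' E)).N ⊕ R.N) = Sum.inl (d.toFun (Sum.inl m)) := by
            rw [hd]
            show Sum.inl (Sum.inl u) = Sum.inl (Sum.inl (μ.toFun m))
            rw [hm2]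
          exact hxc.symm.trans (Quot.sound ⟨Sum.inl m, h1, rfl⟩)
      · push_neg at hm
        exact Or.inr ⟨u, hu, fun nL hl => hm nL hl, hxc.symm⟩
    · simp [LGraph.nodeLabel, LGraph.D] at hxl
    · exact Or.inl ⟨n, hxl, hxc.symm⟩
end

section
/- Let μ : L → U be an Ω-injective matching for an LRR-rewrite rule L ← D(L,E) → R with right leg ρ, and let ∼ be the equivalence on N_R + N_{D(U,μ(E))} generated by D_{μ,E}(n) ∼ ρ(n). Then a labeled node n_U of U is equivalent to some labeled node of R if and only if n_U ∈ μ(N_L^Ω), i.e., n_U is the image under μ of a labeled node of L. -/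
open CategoryTheory

private lemma edgeMap_inj_aux {Ω : Type} {ar : Ω → ℕ} {L U : LGraph Ω ar} (μ : LGraph.Hom L U)
    (hμ : LGraph.OmegaInjective μ) {e e' : L.Edge} (h : μ.edgeMap e = μ.edgeMap e') : e = e' := by
  have h1 : μ.toFun e.1 = μ.toFun e'.1 := congrArg Sigma.fst h
  have h0 : e.1 = e'.1 := hμ _ _ e.label_isSome e'.label_isSome h1
  have h2 : (e.2 : ℕ) = (e'.2 : ℕ) := by
    have := congrArg (fun x : U.Edge => (x.2 : ℕ)) h
    simpa [LGraph.Hom.edgeMap] using this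
  obtain ⟨n, i⟩ := e; obtain ⟨n', i'⟩ := e'
  cases h0
  exact congrArg (Sigma.mk n) (Fin.ext h2)

/-- The invariant predicate used to characterize the equivalence class of a labeled node. -/
private def invP {Ω : Type} {ar : Ω → ℕ} {L R U : LGraph Ω ar}
    (E : Set L.Edge) (ρ : LGraph.Hom (L.D E) R) (μ : LGraph.Hom L U) (u : U.N) :
    ((U.D (μ.edgeMap '' E)).N ⊕ R.N) → Prop :=
  Sum.elim (Sum.elim (fun u' => u' = u)
    (fun f => ∃ e, ∃ he : e ∈ E, μ.edgeMap e = f.1 ∧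
      ∃ n : L.N, μ.toFun n = u ∧ ρ.toFun (Sum.inl n) = ρ.toFun (Sum.inr ⟨e, he⟩)))
    (fun r => ∃ n : L.N, μ.toFun n = u ∧ ρ.toFun (Sum.inl n) = r)

/-- A labeled node of `U` is equivalent (under the relation generated by
`D_{μ,E}(n) ∼ ρ(n)`) to some labeled node of `R` if and only if it lies in the image
`μ(N_L^Ω)` of the labeled nodes of `L`. -/
theorem labeled_U_equiv_labeled_R_iff {Ω : Type} {ar : Ω → ℕ} {L R U : LGraph Ω ar}
    (E : Set L.Edge) (ρ : LGraph.Hom (L.D E) R) (hrule : LGraph.IsLRRRule E ρ)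
    (μ : LGraph.Hom L U) (hμ : LGraph.OmegaInjective μ) :
    ∀ d : LGraph.Hom (L.D E) (U.D (μ.edgeMap '' E)), d.toFun = LGraph.dmapFun μ E →
      ∀ u : U.N, (U.label u).isSome →
        ((∃ nR : R.N, (R.label nR).isSome ∧
            Relation.EqvGen (LGraph.spanRel d ρ) (Sum.inl (Sum.inl u)) (Sum.inr nR)) ↔
          ∃ nL : L.N, (L.label nL).isSome ∧ μ.toFun nL = u) := by
  intro d hd u hu
  constructor
  · rintro ⟨nR, hnR, heqv⟩
    by_contra hno
    push_neg at hno
    have hnone : ∀ n : L.N, μ.toFun n = u → L.label n = none := by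
      intro n hn
      cases hl : L.label n with
      | none => rfl
      | some f => exact absurd hn (hno n (by rw [hl]; rfl))
    have key : ∀ x y, Relation.EqvGen (LGraph.spanRel d ρ) x y →
        (invP E ρ μ u x ↔ invP E ρ μ u y) := by
      intro x y h
      induction h with
      | rel a b hab =>
        obtain ⟨n₀, ha, hb⟩ := hab
        subst ha; subst hb
        rw [hd]
        cases n₀ with
        | inl n =>
          show (μ.toFun n = u) ↔ ∃ n' : L.N, μ.toFun n' = u ∧
              ρ.toFun (Sum.inl n') = ρ.toFun (Sum.inl n)
          constructor
          · intro h; exact ⟨n, h, rfl⟩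
          · rintro ⟨n', hn', hρ⟩
            have h1 : L.label n' = none := hnone n' hn'
            have h2 : R.label (ρ.toFun (Sum.inl n')) = none := hrule.1 n' h1
            have h3 : L.label n = none := by
              cases hl : L.label n with
              | none => rfl
              | some f =>
                have := ρ.map_label (Sum.inl n) f hl
                rw [← hρ, h2] at this
                exact absurd this (by simp)
            rw [hrule.2 n n' h3 h1 hρ.symm]
            exact hn'
        | inr e =>
          obtain ⟨e, he⟩ := e
          show (∃ e', ∃ he' : e' ∈ E, μ.edgeMap e' = μ.edgeMap e ∧
              ∃ n : L.N, μ.toFun n = u ∧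
                ρ.toFun (Sum.inl n) = ρ.toFun (Sum.inr ⟨e', he'⟩)) ↔
              ∃ n : L.N, μ.toFun n = u ∧ ρ.toFun (Sum.inl n) = ρ.toFun (Sum.inr ⟨e, he⟩)
          constructor
          · rintro ⟨e', he', heq, hAe⟩
            cases edgeMap_inj_aux μ hμ heq
            exact hAe
          · intro h; exact ⟨e, he, rfl, h⟩
      | refl => exact Iff.rfl
      | symm _ _ _ ih => exact ih.symm
      | trans _ _ _ _ _ ih1 ih2 => exact ih1.trans ih2
    have h1 : invP E ρ μ u (Sum.inl (Sum.inl u)) := rfl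
    have h2 : ∃ n : L.N, μ.toFun n = u ∧ ρ.toFun (Sum.inl n) = nR :=
      (key _ _ heqv).mp h1
    obtain ⟨n, hn, hρ⟩ := h2
    have := hrule.1 n (hnone n hn)
    rw [hρ] at this
    rw [this] at hnR
    simp at hnR
  · rintro ⟨nL, hL, hμL⟩
    obtain ⟨f, hf⟩ := Option.isSome_iff_exists.mp hL
    have hDlab : (L.D E).label (Sum.inl nL) = some f := hf
    refine ⟨ρ.toFun (Sum.inl nL), ?_, ?_⟩
    · rw [ρ.map_label (Sum.inl nL) f hDlab]; rfl
    · exact Relation.EqvGen.rel _ _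
        ⟨Sum.inl nL, by rw [hd, ← hμL]; rfl, rfl⟩
end

section
/- If Γ is a pushout square in the category of graphs obtained from a strongly labeled span via the canonical construction, then the underlying square of node sets N(Γ) is a pushout in Set; conversely, together with the property that every labeled node of the pushout object is an image of a labeled node from one of the two legs, these conditions characterize the constructed pushout (it satisfies the hypotheses of the pushout-recognition theorem). -/
open CategoryTheory

/-- The canonical pushout of a strongly labeled span satisfies the
hypotheses of the recognition theorem: its node-set square is a pushout in `Set`
(i.e. in `Type`), and every labeled node of the apex is the image of a labeled node
of `G₁` or `G₂`. -/
theorem canonical_pushout_satisfies_recognition {Ω : Type} {ar : Ω → ℕ}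
    {G₀ G₁ G₂ : OGraph Ω ar} (φ₁ : OGraph.Hom G₀ G₁) (φ₂ : OGraph.Hom G₀ G₂)
    (hSL : OGraph.StronglyLabeled φ₁ φ₂) :
    IsPushout (C := Type) (TypeCat.ofHom φ₁.toFun) (TypeCat.ofHom φ₂.toFun)
      (TypeCat.ofHom (fun n => Quot.mk (OGraph.spanRel φ₁ φ₂) (Sum.inl n) :
        G₁.N → (OGraph.pushoutGraph φ₁ φ₂).N))
      (TypeCat.ofHom (fun n => Quot.mk (OGraph.spanRel φ₁ φ₂) (Sum.inr n))) ∧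
    ∀ c : (OGraph.pushoutGraph φ₁ φ₂).N, ((OGraph.pushoutGraph φ₁ φ₂).label c).isSome →
      ∃ x : G₁.N ⊕ G₂.N, (OGraph.nodeLabel G₁ G₂ x).isSome ∧
        Quot.mk (OGraph.spanRel φ₁ φ₂) x = c := by
  constructor
  · refine IsPushout.of_isColimit' ⟨by ext n₀; exact Quot.sound ⟨n₀, rfl, rfl⟩⟩ ?_
    refine Limits.PushoutCocone.IsColimit.mk _
      (fun s => TypeCat.ofHom (Quot.lift (Sum.elim s.inl s.inr) ?_)) ?_ ?_ ?_
    · rintro x y ⟨n₀, rfl, rfl⟩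
      exact types_congr_hom s.condition n₀
    · intro s; rfl
    · intro s; rfl
    · intro s m h₁ h₂
      ext c
      induction c using Quot.ind with
      | _ x =>
        cases x with
        | inl n => exact types_congr_hom h₁ n
        | inr n => exact types_congr_hom h₂ n
  · intro c hc
    by_cases h : ∃ x, Quot.mk _ x = c ∧ (OGraph.nodeLabel G₁ G₂ x).isSome
    · obtain ⟨x, hx, hxl⟩ := h
      exact ⟨x, hxl, hx⟩
    · exfalso
      simp only [OGraph.pushoutGraph, dif_neg h] at hc
      simp at hc
end
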